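/- arXiv:1811.08516 — 7 statements merged into one kernel-verified Lean document; each statement's English description precedes it below -/
import Mathlib

section
/- Let P = (X, ≼) be a finite poset, X′ ⊆ X, and 𝒞′ a set of maximal chains of P that preserves the decomposition of maximal chains intersecting in X′ (i.e., whenever C¹ = {x_{-k},…,x_{-1},x*,x_1,…,x_n} and C² = {y_{-l},…,y_{-1},x*,y_1,…,y_m} belong to 𝒞′ and intersect at x* ∈ X′, the recombined maximal chains C₁² = {x_{-k},…,x_{-1},x*,y_1,…,y_m} and C₂¹ = {y_{-l},…,y_{-1},x*,x_1,…,x_n} also belong to 𝒞′). Define the relation ≼_{𝒞′} on X′ by: x ≼_{𝒞′} y iff x = y or there exists C ∈ 𝒞′ with x, y ∈ C and x ≺ y. Then ≼_{𝒞′} is a partial order on X′. -/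
/-- Given a finite poset `X`, a subset `X'`, and a family `𝒞'` of maximal chains of `X`
that preserves the decomposition of maximal chains intersecting in `X'`, the relation
`x ≼_{𝒞'} y ↔ x = y ∨ ∃ C ∈ 𝒞', x ∈ C ∧ y ∈ C ∧ x < y` is a partial order on `X'`
(reflexive, antisymmetric and transitive on `X'`). -/
theorem subposet_partialOrder (X : Type*) [Fintype X] [PartialOrder X]
    (X' : Set X) (𝒞' : Set (Set X))
    (hmax : ∀ C ∈ 𝒞', IsMaxChain (· ≤ ·) C)
    (hpres : ∀ C1 ∈ 𝒞', ∀ C2 ∈ 𝒞', ∀ x ∈ C1 ∩ C2 ∩ X',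
      ({z ∈ C1 | z ≤ x} ∪ {z ∈ C2 | x ≤ z}) ∈ 𝒞' ∧
      ({z ∈ C2 | z ≤ x} ∪ {z ∈ C1 | x ≤ z}) ∈ 𝒞')
    (r : X → X → Prop)
    (hr : ∀ x y, r x y ↔ (x = y ∨ ∃ C ∈ 𝒞', x ∈ C ∧ y ∈ C ∧ x < y)) :
    (∀ x ∈ X', r x x) ∧
    (∀ x ∈ X', ∀ y ∈ X', r x y → r y x → x = y) ∧
    (∀ x ∈ X', ∀ y ∈ X', ∀ z ∈ X', r x y → r y z → r x z) := by
  refine ⟨fun x _ => (hr x x).2 (Or.inl rfl), ?_, ?_⟩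
  · intro x _ y _ hxy hyx
    rcases (hr x y).1 hxy with h | ⟨C, _, _, _, hlt⟩
    · exact h
    rcases (hr y x).1 hyx with h | ⟨D, _, _, _, hlt'⟩
    · exact h.symm
    exact absurd (hlt.trans hlt') (lt_irrefl x)
  · intro x _ y hy z _ hxy hyz
    rcases (hr x y).1 hxy with rfl | ⟨C1, hC1, hxC1, hyC1, hlt1⟩
    · exact hyz
    rcases (hr y z).1 hyz with rfl | ⟨C2, hC2, hyC2, hzC2, hlt2⟩
    · exact hxy
    have hmem : y ∈ C1 ∩ C2 ∩ X' := ⟨⟨hyC1, hyC2⟩, hy⟩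
    obtain ⟨hD, -⟩ := hpres C1 hC1 C2 hC2 y hmem
    exact (hr x z).2 (Or.inr ⟨_, hD, Or.inl ⟨hxC1, hlt1.le⟩,
      Or.inr ⟨hzC2, hlt2.le⟩, hlt1.trans hlt2⟩)
end

section
/- With the setup of the preceding statement, for every maximal chain C of the poset P′ = (X′, ≼_{𝒞′}) of size at least two, there exists a maximal chain C′ ∈ 𝒞′ of P such that C = C′ ∩ X′. -/
theorem my_aux {X : Type*} [Fintype X] [PartialOrder X]
    (X' : Set X) (𝒞' : Set (Set X))
    (hpres : ∀ C1 ∈ 𝒞', ∀ C2 ∈ 𝒞', ∀ x ∈ C1 ∩ C2 ∩ X',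
      ({z ∈ C1 | z ≤ x} ∪ {z ∈ C2 | x ≤ z}) ∈ 𝒞' ∧
      ({z ∈ C2 | z ≤ x} ∪ {z ∈ C1 | x ≤ z}) ∈ 𝒞')
    (r : X → X → Prop)
    (hr : ∀ x y, r x y ↔ (x = y ∨ ∃ C ∈ 𝒞', x ∈ C ∧ y ∈ C ∧ x < y)) :
    ∀ n (C : Set X), C.ncard = n → C ⊆ X' → IsChain r C → 2 ≤ C.ncard →
      ∃ C' ∈ 𝒞', C ⊆ C' := by
  have hle : ∀ C : Set X, IsChain r C → IsChain (· ≤ ·) C := by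
    intro C hC x hx y hy hxy
    rcases hC hx hy hxy with h | h
    · rcases (hr x y).1 h with rfl | ⟨E, _, _, _, hlt⟩
      · exact absurd rfl hxy
      · exact Or.inl hlt.le
    · rcases (hr y x).1 h with rfl | ⟨E, _, _, _, hlt⟩
      · exact absurd rfl hxy
      · exact Or.inr hlt.le
  have hgreatest : ∀ C : Set X, C.Nonempty → IsChain r C → ∃ m ∈ C, ∀ x ∈ C, x ≤ m := by
    intro C hne hC
    obtain ⟨m, hm, hmax⟩ := Set.Finite.exists_maximalFor id C C.toFinite hne
    refine ⟨m, hm, fun x hx => ?_⟩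
    rcases eq_or_ne x m with rfl | hxm
    · exact le_rfl
    rcases hle C hC hm hx hxm.symm with h | h
    · exact hmax hx h
    · exact h
  intro n
  induction n using Nat.strong_induction_on with
  | _ n ih =>
    intro C hn hsub hC h2
    rcases eq_or_lt_of_le h2 with heq | h3
    · -- base case: ncard C = 2
      obtain ⟨a, b, hab, rfl⟩ := Set.ncard_eq_two.mp heq.symm
      have h := hC (Set.mem_insert a _) (Set.mem_insert_of_mem a rfl) hab
      rcases h with h | h
      · rcases (hr a b).1 h with rfl | ⟨E, hE, haE, hbE, _⟩
        · exact absurd rfl hab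
        · exact ⟨E, hE, by rintro x (rfl | rfl) <;> simpa⟩
      · rcases (hr b a).1 h with rfl | ⟨E, hE, hbE, haE, _⟩
        · exact absurd rfl hab
        · exact ⟨E, hE, by rintro x (rfl | rfl) <;> simpa⟩
    · -- inductive step: ncard C ≥ 3
      obtain ⟨m, hm, hmg⟩ := hgreatest C (Set.nonempty_of_ncard_ne_zero (by omega)) hC
      set C₀ := C \ {m} with hC₀
      have hC₀card : C₀.ncard = C.ncard - 1 := by
        rw [hC₀, Set.ncard_diff_singleton_of_mem hm]
      have hC₀chain : IsChain r C₀ := hC.mono Set.diff_subset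
      have hC₀sub : C₀ ⊆ X' := fun x hx => hsub hx.1
      obtain ⟨D, hD, hDsub⟩ := ih (C.ncard - 1) (by omega) C₀ (by omega) hC₀sub hC₀chain (by omega)
      obtain ⟨m₀, hm₀, hm₀g⟩ := hgreatest C₀ (Set.nonempty_of_ncard_ne_zero (by omega)) hC₀chain
      have hm₀m : m₀ ≠ m := hm₀.2
      have hrel : r m₀ m := by
        rcases hC hm₀.1 hm hm₀m with h | h
        · exact h
        · rcases (hr m m₀).1 h with rfl | ⟨E, _, _, _, hlt⟩
          · exact absurd rfl hm₀m.symm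
          · exact absurd (lt_of_lt_of_le hlt (hmg m₀ hm₀.1)) (lt_irrefl m)
      rcases (hr m₀ m).1 hrel with rfl | ⟨E, hE, hm₀E, hmE, hlt⟩
      · exact absurd rfl hm₀m
      have hmem : m₀ ∈ D ∩ E ∩ X' := ⟨⟨hDsub hm₀, hm₀E⟩, hC₀sub hm₀⟩
      obtain ⟨hsplice, -⟩ := hpres D hD E hE m₀ hmem
      refine ⟨_, hsplice, fun x hx => ?_⟩
      rcases eq_or_ne x m with rfl | hxm
      · exact Or.inr ⟨hmE, hlt.le⟩
      · exact Or.inl ⟨hDsub ⟨hx, hxm⟩, hm₀g x ⟨hx, hxm⟩⟩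


/-- With the setup of the subposet `P' = (X', ≼_{𝒞'})`, every maximal chain `C` of `P'`
of size at least two is of the form `C' ∩ X'` for some maximal chain `C' ∈ 𝒞'` of `P`. -/
theorem subposet_maxChain_from_family (X : Type*) [Fintype X] [PartialOrder X]
    (X' : Set X) (𝒞' : Set (Set X))
    (hmax : ∀ C ∈ 𝒞', IsMaxChain (· ≤ ·) C)
    (hpres : ∀ C1 ∈ 𝒞', ∀ C2 ∈ 𝒞', ∀ x ∈ C1 ∩ C2 ∩ X',
      ({z ∈ C1 | z ≤ x} ∪ {z ∈ C2 | x ≤ z}) ∈ 𝒞' ∧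
      ({z ∈ C2 | z ≤ x} ∪ {z ∈ C1 | x ≤ z}) ∈ 𝒞')
    (r : X → X → Prop)
    (hr : ∀ x y, r x y ↔ (x = y ∨ ∃ C ∈ 𝒞', x ∈ C ∧ y ∈ C ∧ x < y))
    (C : Set X) (hCsub : C ⊆ X') (hchain : IsChain r C)
    (hCmax : ∀ D ⊆ X', IsChain r D → C ⊆ D → C = D)
    (hcard : 2 ≤ C.ncard) :
    ∃ C' ∈ 𝒞', C = C' ∩ X' := by
  obtain ⟨C', hC', hsub⟩ := my_aux X' 𝒞' hpres r hr C.ncard C rfl hCsub hchain hcard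
  refine ⟨C', hC', ?_⟩
  have hchain' : IsChain r (C' ∩ X') := by
    intro x hx y hy hxy
    rcases (hmax C' hC').1 hx.1 hy.1 hxy with h | h
    · exact Or.inl ((hr x y).2 (Or.inr ⟨C', hC', hx.1, hy.1, lt_of_le_of_ne h hxy⟩))
    · exact Or.inr ((hr y x).2 (Or.inr ⟨C', hC', hy.1, hx.1, lt_of_le_of_ne h (Ne.symm hxy)⟩))
  exact hCmax (C' ∩ X') Set.inter_subset_right hchain' (fun x hx => ⟨hsub hx, hCsub hx⟩)
end

section
/- Let G = (V, E) be a simple directed acyclic connected graph with distinguished source s and destination t. Define the relation ≼_G on the edge set E by: u ≼_G v iff u = v or there exists an s–t path traversing u and then v. Then ≼_G is a partial order on E. -/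
/-- `p` is an `s`–`t` path in the directed graph with edge set `E`:
a nonempty list of edges, consecutive edges matching head-to-tail,
starting at `s` and ending at `t`. -/
def IsSTPath {V : Type*} (E : Set (V × V)) (s t : V) (p : List (V × V)) : Prop :=
  p ≠ [] ∧ (∀ e ∈ p, e ∈ E) ∧ (p.head?.map Prod.fst = some s) ∧
    (p.getLast?.map Prod.snd = some t) ∧ List.Chain' (fun e f => e.2 = f.1) p

/-- The graph with edge set `E` has no directed cycle. -/
def NoDirectedCycle {V : Type*} (E : Set (V × V)) : Prop :=
  ¬ ∃ p : List (V × V), p ≠ [] ∧ (∀ e ∈ p, e ∈ E) ∧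
    List.Chain' (fun e f => e.2 = f.1) p ∧
    p.getLast?.map Prod.snd = p.head?.map Prod.fst

/-- From a chain on `A ++ x :: B` extract the chain on `A`, the chain on `x :: B`,
and the linking relation. -/
private lemma chain'_mid {α : Type*} {R : α → α → Prop} {A B : List α} {x : α}
    (h : List.Chain' R (A ++ x :: B)) :
    List.Chain' R A ∧ List.Chain' R (x :: B) ∧ ∀ a ∈ A.getLast?, R a x := by
  rcases List.isChain_append.1 h with ⟨h₁, h₂, h₃⟩
  exact ⟨h₁, h₂, fun a ha => h₃ a ha x rfl⟩

/-- On a simple directed acyclic connected graph with source `s` and destination `t`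
(every edge lies on some `s`–`t` path), the relation `u ≼_G v` iff `u = v` or some
`s`–`t` path traverses `u` and then `v`, is a partial order on the edge set `E`. -/
theorem edge_relation_partialOrder {V : Type*} (E : Set (V × V)) (s t : V)
    (hacyc : NoDirectedCycle E)
    (hconn : ∀ e ∈ E, ∃ p, IsSTPath E s t p ∧ e ∈ p)
    (r : (V × V) → (V × V) → Prop)
    (hr : ∀ u v, r u v ↔ (u = v ∨ ∃ p l₁ l₂ l₃, IsSTPath E s t p ∧
      p = l₁ ++ u :: l₂ ++ v :: l₃)) :
    (∀ u ∈ E, r u u) ∧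
    (∀ u ∈ E, ∀ v ∈ E, r u v → r v u → u = v) ∧
    (∀ u ∈ E, ∀ v ∈ E, ∀ w ∈ E, r u v → r v w → r u w) := by
  refine ⟨fun u _ => (hr u u).2 (Or.inl rfl), ?_, ?_⟩
  · -- antisymmetry
    intro u _ v _ huv hvu
    by_contra hne
    rcases (hr u v).1 huv with h | ⟨p, l₁, l₂, l₃, hp, rfl⟩
    · exact hne h
    rcases (hr v u).1 hvu with h | ⟨q, m₁, m₂, m₃, hq, rfl⟩
    · exact hne h.symm
    obtain ⟨-, hpE, -, -, hpc⟩ := hp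
    obtain ⟨-, hqE, -, -, hqc⟩ := hq
    -- hpc : Chain' _ ((l₁ ++ u :: l₂) ++ v :: l₃)
    obtain ⟨hA, -, hlink1⟩ := chain'_mid hpc
    have hcul : List.Chain' (fun e f => e.2 = f.1) (u :: l₂) := (chain'_mid hA).2.1
    obtain ⟨hB, -, hlink2⟩ := chain'_mid hqc
    have hcvm : List.Chain' (fun e f => e.2 = f.1) (v :: m₂) := (chain'_mid hB).2.1
    apply hacyc
    refine ⟨(u :: l₂) ++ v :: m₂, by simp, ?_, ?_, ?_⟩
    · intro e he
      rcases List.mem_append.1 he with he | he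
      · rcases List.mem_cons.1 he with rfl | he'
        · exact hpE e (by simp)
        · exact hpE e (by simp [he'])
      · rcases List.mem_cons.1 he with rfl | he'
        · exact hqE e (by simp)
        · exact hqE e (by simp [he'])
    · refine List.IsChain.append hcul hcvm (fun x hx y hy => ?_)
      simp only [List.head?_cons, Option.mem_def, Option.some.injEq] at hy
      subst hy
      apply hlink1
      rw [List.getLast?_append_cons]
      exact hx
    · rw [List.getLast?_append_cons]
      obtain ⟨g, hg⟩ : ∃ g, (v :: m₂).getLast? = some g :=
        Option.ne_none_iff_exists'.1 (by simp)
      rw [hg]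
      have : g.2 = u.1 := by
        apply hlink2
        rw [List.getLast?_append_cons]
        exact hg
      simp [this]
  · -- transitivity
    intro u _ v _ w _ huv hvw
    rcases (hr u v).1 huv with rfl | ⟨p, l₁, l₂, l₃, hp, rfl⟩
    · exact hvw
    rcases (hr v w).1 hvw with rfl | ⟨q, m₁, m₂, m₃, hq, rfl⟩
    · exact huv
    obtain ⟨-, hpE, hps, -, hpc⟩ := hp
    obtain ⟨-, hqE, -, hqt, hqc⟩ := hq
    refine (hr u w).2 (Or.inr ⟨l₁ ++ u :: l₂ ++ v :: (m₂ ++ w :: m₃),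
      l₁, l₂ ++ v :: m₂, m₃, ?_, by simp⟩)
    obtain ⟨hc1, -, hlink1⟩ := chain'_mid hpc
    -- chain on v :: (m₂ ++ w :: m₃) from q
    rw [show (m₁ ++ v :: m₂ ++ w :: m₃ : List (V × V)) =
      m₁ ++ v :: (m₂ ++ w :: m₃) by simp] at hqc
    have hq1 : List.Chain' (fun e f => e.2 = f.1) (v :: (m₂ ++ w :: m₃)) :=
      (chain'_mid hqc).2.1
    refine ⟨by simp, ?_, ?_, ?_, ?_⟩
    · intro e he
      simp only [List.mem_append, List.mem_cons] at he
      rcases he with (he | rfl | he) | rfl | he | rfl | he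
      · exact hpE e (by simp [he])
      · exact hpE e (by simp)
      · exact hpE e (by simp [he])
      · exact hqE e (by simp)
      · exact hqE e (by simp [he])
      · exact hqE e (by simp)
      · exact hqE e (by simp [he])
    · cases l₁ <;> simpa using hps
    · rw [List.getLast?_append_cons,
        show (v :: (m₂ ++ w :: m₃) : List (V × V)) = (v :: m₂) ++ w :: m₃ by simp,
        List.getLast?_append_cons]
      rw [show (m₁ ++ v :: m₂ ++ w :: m₃ : List (V × V)) =
        (m₁ ++ v :: m₂) ++ w :: m₃ by simp, List.getLast?_append_cons] at hqt
      exact hqt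
    · refine List.IsChain.append hc1 hq1 (fun x hx y hy => ?_)
      simp only [List.head?_cons, Option.mem_def, Option.some.injEq] at hy
      subst hy
      exact hlink1 x hx
end

section
/- Let X be a finite set, 𝒞 a collection of subsets of X, ρ ∈ [0,1]^X, π ∈ (−∞,1]^𝒞, and δ_C = ∑_{x∈C} ρ_x − π_C ≥ 0 for all C. The feasibility problem (D)—existence of a probability distribution σ over 2^X with ∑_{S∋x} σ_S = ρ_x for all x and ∑_{S:S∩C≠∅} σ_S ≥ π_C for all C—is feasible if and only if the optimal value of the linear program (Q): minimize ∑_S σ_S subject to σ ≥ 0, ∑_{S∋x} σ_S = ρ_x for all x, and ∑_{S:|S∩C|≥2} σ_S(|S∩C|−1) ≤ δ_C for all C, is at most 1. -/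
open Finset

lemma key1 {X : Type*} [Fintype X] [DecidableEq X] (σ : Finset X → ℝ) (C : Finset X) :
    ∑ x ∈ C, ∑ S ∈ univ.filter (fun S : Finset X => x ∈ S), σ S
      = ∑ S : Finset X, σ S * ((S ∩ C).card : ℝ) := by
  simp only [Finset.sum_filter]
  rw [Finset.sum_comm]
  refine Finset.sum_congr rfl fun S _ => ?_
  rw [← Finset.sum_filter, Finset.sum_const, nsmul_eq_mul, mul_comm]
  congr 2
  rw [Finset.inter_comm, Finset.filter_mem_eq_inter]

lemma key2 {X : Type*} [Fintype X] [DecidableEq X] (σ : Finset X → ℝ) (C : Finset X) :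
    ∑ S ∈ univ.filter (fun S : Finset X => 2 ≤ (S ∩ C).card),
        σ S * (((S ∩ C).card : ℝ) - 1)
      = (∑ S : Finset X, σ S * ((S ∩ C).card : ℝ))
        - ∑ S ∈ univ.filter (fun S : Finset X => (S ∩ C).Nonempty), σ S := by
  have h1 : ∑ S ∈ univ.filter (fun S : Finset X => 2 ≤ (S ∩ C).card),
        σ S * (((S ∩ C).card : ℝ) - 1)
      = ∑ S ∈ univ.filter (fun S : Finset X => (S ∩ C).Nonempty),
        σ S * (((S ∩ C).card : ℝ) - 1) := by
    apply Finset.sum_subset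
    · intro S hS
      simp only [mem_filter, mem_univ, true_and] at *
      exact Finset.card_pos.mp (by omega)
    · intro S hS hS2
      simp only [mem_filter, mem_univ, true_and] at hS hS2
      have : (S ∩ C).card = 1 := by
        have := Finset.card_pos.mpr hS; omega
      simp [this]
  have h2 : ∑ S ∈ univ.filter (fun S : Finset X => (S ∩ C).Nonempty), σ S * ((S ∩ C).card : ℝ)
      = ∑ S : Finset X, σ S * ((S ∩ C).card : ℝ) := by
    apply Finset.sum_subset (Finset.filter_subset _ _)
    intro S _ hS
    simp only [mem_filter, mem_univ, true_and, Finset.not_nonempty_iff_eq_empty] at hS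
    simp [hS]
  rw [h1, ← h2, ← Finset.sum_sub_distrib]
  exact Finset.sum_congr rfl fun S _ => by ring

/-- The feasibility problem (D) — existence of a probability distribution over `2^X` with
marginals `ρ` and hitting probabilities at least `π` — is feasible if and only if the
linear program (Q) has a feasible solution with objective value `∑_S σ_S` at most 1. -/
theorem D_feasible_iff_Q_le_one (X : Type*) [Fintype X] [DecidableEq X]
    (ρ : X → ℝ) (hρ0 : ∀ x, 0 ≤ ρ x) (hρ1 : ∀ x, ρ x ≤ 1)
    (𝒞 : Set (Finset X)) (π : Finset X → ℝ) (hπ : ∀ C ∈ 𝒞, π C ≤ 1)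
    (hδ : ∀ C ∈ 𝒞, 0 ≤ (∑ x ∈ C, ρ x) - π C) :
    (∃ σ : Finset X → ℝ,
      (∀ S, 0 ≤ σ S) ∧
      (∑ S : Finset X, σ S = 1) ∧
      (∀ x : X, ∑ S ∈ univ.filter (fun S : Finset X => x ∈ S), σ S = ρ x) ∧
      (∀ C ∈ 𝒞, π C ≤ ∑ S ∈ univ.filter (fun S : Finset X => (S ∩ C).Nonempty), σ S)) ↔
    (∃ σ : Finset X → ℝ,
      (∀ S, 0 ≤ σ S) ∧
      (∀ x : X, ∑ S ∈ univ.filter (fun S : Finset X => x ∈ S), σ S = ρ x) ∧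
      (∀ C ∈ 𝒞, ∑ S ∈ univ.filter (fun S : Finset X => 2 ≤ (S ∩ C).card),
          σ S * (((S ∩ C).card : ℝ) - 1) ≤ (∑ x ∈ C, ρ x) - π C) ∧
      (∑ S : Finset X, σ S ≤ 1)) := by
  constructor
  · rintro ⟨σ, h0, h1, hm, hh⟩
    refine ⟨σ, h0, hm, fun C hC => ?_, le_of_eq h1⟩
    have e1 : ∑ x ∈ C, ρ x = ∑ S : Finset X, σ S * ((S ∩ C).card : ℝ) := by
      rw [← key1 σ C]; exact Finset.sum_congr rfl fun x _ => (hm x).symm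
    rw [key2, e1]
    have := hh C hC
    linarith
  · rintro ⟨σ, h0, hm, hq, ht⟩
    set t := ∑ S : Finset X, σ S with hts
    refine ⟨fun S => σ S + if S = ∅ then 1 - t else 0, fun S => ?_, ?_, fun x => ?_,
      fun C hC => ?_⟩
    · have := h0 S
      dsimp only
      split <;> simp <;> linarith
    · rw [Finset.sum_add_distrib]
      simp only [Finset.sum_ite_eq', Finset.mem_univ, if_true]
      rw [← hts]; ring
    · rw [Finset.sum_add_distrib]
      have : ∑ S ∈ univ.filter (fun S : Finset X => x ∈ S),
          (if S = ∅ then 1 - t else 0) = 0 := by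
        apply Finset.sum_eq_zero
        intro S hS
        simp only [mem_filter] at hS
        have : S ≠ ∅ := Finset.ne_empty_of_mem hS.2
        simp [this]
      rw [this, add_zero, hm]
    · have e1 : ∑ x ∈ C, ρ x = ∑ S : Finset X, σ S * ((S ∩ C).card : ℝ) := by
        rw [← key1 σ C]; exact Finset.sum_congr rfl fun x _ => (hm x).symm
      have hk := key2 σ C
      have hq' := hq C hC
      have : ∑ S ∈ univ.filter (fun S : Finset X => (S ∩ C).Nonempty),
          (σ S + if S = ∅ then 1 - t else 0)
          = ∑ S ∈ univ.filter (fun S : Finset X => (S ∩ C).Nonempty), σ S := by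
        apply Finset.sum_congr rfl
        intro S hS
        simp only [mem_filter] at hS
        have : S ≠ ∅ := by
          rintro rfl
          simp at hS
        simp [this]
      rw [this]
      linarith
end

section
/- Let P = (X, ≼) be a finite nonempty poset with set of maximal chains 𝒞, and suppose ρ ∈ [0,1]^X and π ∈ (−∞,1]^𝒞 satisfy: (1) ∑_{x∈C} ρ_x ≥ π_C for all C ∈ 𝒞, and (2) the conservation law: whenever two maximal chains C¹, C² intersect at x* and recombine into C₁², C₂¹ with C¹∪C² = C₁²∪C₂¹, then π_{C¹} + π_{C²} = π_{C₁²} + π_{C₂¹}. Then there exists a probability distribution σ over 2^X such that ∑_{S∋x} σ_S = ρ_x for all x ∈ X and ∑_{S:S∩C≠∅} σ_S ≥ π_C for all C ∈ 𝒞. -/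
open Finset MeasureTheory

set_option linter.unusedSectionVars false
set_option maxHeartbeats 1000000

local instance decLTofLE {X : Type*} [PartialOrder X]
    [DecidableRel (· ≤ · : X → X → Prop)] : DecidableRel (· < · : X → X → Prop) := fun a b =>
  decidable_of_iff (a ≤ b ∧ ¬ b ≤ a) lt_iff_le_not_ge.symm

section Aux

variable {X : Type*} [Fintype X] [Nonempty X] [DecidableEq X] [PartialOrder X]
  [DecidableRel (· ≤ · : X → X → Prop)]

lemma mc_chain {C : Finset X} (h : IsMaxChain (· ≤ ·) (C : Set X)) {a b : X}
    (ha : a ∈ C) (hb : b ∈ C) : a ≤ b ∨ b ≤ a := by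
  rcases eq_or_ne a b with rfl | hne
  · exact Or.inl le_rfl
  · exact h.1 (by exact_mod_cast ha) (by exact_mod_cast hb) hne

lemma mc_insert {C : Finset X} (h : IsMaxChain (· ≤ ·) (C : Set X)) {z : X}
    (hz : ∀ a ∈ C, z ≤ a ∨ a ≤ z) : z ∈ C := by
  have hch : IsChain (· ≤ ·) (insert z (C : Set X)) := by
    intro a ha b hb hne
    simp only [Set.mem_insert_iff] at ha hb
    rcases ha with rfl | ha
    · rcases hb with rfl | hb
      · exact absurd rfl hne
      · exact hz b (by exact_mod_cast hb)
    · rcases hb with rfl | hb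
      · exact Or.symm (hz a (by exact_mod_cast ha))
      · exact h.1 ha hb hne
  have he := h.2 hch (Set.subset_insert _ _)
  have : z ∈ (C : Set X) := by rw [he]; exact Set.mem_insert _ _
  exact_mod_cast this

lemma mc_nonempty {C : Finset X} (h : IsMaxChain (· ≤ ·) (C : Set X)) : C.Nonempty := by
  by_contra hne
  rw [Finset.not_nonempty_iff_eq_empty] at hne
  subst hne
  obtain ⟨x⟩ := ‹Nonempty X›
  have : x ∈ (∅ : Finset X) := mc_insert h (by simp)
  simp at this

lemma mc_least_sub {C V : Finset X} (h : IsMaxChain (· ≤ ·) (C : Set X))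
    (hsub : V ⊆ C) (hne : V.Nonempty) : ∃ m ∈ V, ∀ z ∈ V, m ≤ z := by
  obtain ⟨m, hm, hmin⟩ := Finset.exists_minimal hne
  refine ⟨m, hm, fun z hz => ?_⟩
  rcases mc_chain h (hsub hm) (hsub hz) with h1 | h1
  · exact h1
  · rcases eq_or_lt_of_le h1 with rfl | hlt
    · exact le_rfl
    · exact absurd (hmin hz hlt.le) hlt.not_ge

lemma mc_least_minimal {C : Finset X} (h : IsMaxChain (· ≤ ·) (C : Set X)) {m : X}
    (hleast : ∀ z ∈ C, m ≤ z) {w : X} (hw : w ≤ m) : w = m := by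
  have hwC : w ∈ C := mc_insert h (fun a ha => Or.inl (hw.trans (hleast a ha)))
  exact le_antisymm hw (hleast w hwC)

lemma mc_recomb {C1 C2 : Finset X} (h1 : IsMaxChain (· ≤ ·) (C1 : Set X))
    (h2 : IsMaxChain (· ≤ ·) (C2 : Set X)) {y : X} (hy1 : y ∈ C1) (hy2 : y ∈ C2) :
    IsMaxChain (· ≤ ·) ((C1.filter (· ≤ y) ∪ C2.filter (y ≤ ·) : Finset X) : Set X) := by
  have hmem : ∀ a : X, a ∈ (C1.filter (· ≤ y) ∪ C2.filter (y ≤ ·) : Finset X) ↔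
      (a ∈ C1 ∧ a ≤ y) ∨ (a ∈ C2 ∧ y ≤ a) := by
    intro a; simp [Finset.mem_union, Finset.mem_filter]
  constructor
  · intro a ha b hb hne
    rw [Finset.mem_coe, hmem] at ha hb
    rcases ha with ⟨ha, hay⟩ | ⟨ha, hya⟩ <;> rcases hb with ⟨hb, hby⟩ | ⟨hb, hyb⟩
    · exact h1.1 (by exact_mod_cast ha) (by exact_mod_cast hb) hne
    · exact Or.inl (hay.trans hyb)
    · exact Or.inr (hby.trans hya)
    · exact h2.1 (by exact_mod_cast ha) (by exact_mod_cast hb) hne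
  · intro t ht hsub
    refine Set.Subset.antisymm hsub fun z hz => ?_
    have hyS : y ∈ ((C1.filter (· ≤ y) ∪ C2.filter (y ≤ ·) : Finset X) : Set X) := by
      rw [Finset.mem_coe, hmem]; exact Or.inl ⟨hy1, le_rfl⟩
    have hcomp : z ≤ y ∨ y ≤ z := by
      rcases eq_or_ne z y with rfl | hne
      · exact Or.inl le_rfl
      · exact ht hz (hsub hyS) hne
    rw [Finset.mem_coe, hmem]
    rcases hcomp with hzy | hyz
    · left
      refine ⟨mc_insert h1 fun a ha => ?_, hzy⟩
      rcases mc_chain h1 hy1 ha with hya | hay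
      · exact Or.inl (hzy.trans hya)
      · have haS : a ∈ t := hsub (by rw [Finset.mem_coe, hmem]; exact Or.inl ⟨ha, hay⟩)
        rcases eq_or_ne z a with rfl | hne
        · exact Or.inl le_rfl
        · exact ht hz haS hne
    · right
      refine ⟨mc_insert h2 fun a ha => ?_, hyz⟩
      rcases mc_chain h2 hy2 ha with hya | hay
      · have haS : a ∈ t := hsub (by rw [Finset.mem_coe, hmem]; exact Or.inr ⟨ha, hya⟩)
        rcases eq_or_ne z a with rfl | hne
        · exact Or.inl le_rfl
        · exact ht hz haS hne
      · exact Or.inr (hay.trans hyz)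

lemma exists_mc (x : X) : ∃ C : Finset X, IsMaxChain (· ≤ ·) (C : Set X) ∧ x ∈ C := by
  obtain ⟨M, hM, hsub⟩ := (IsChain.singleton : IsChain (· ≤ ·) {x}).exists_maxChain
  have hfin : M.Finite := Set.toFinite M
  refine ⟨hfin.toFinset, ?_, ?_⟩
  · rwa [Set.Finite.coe_toFinset]
  · rw [Set.Finite.mem_toFinset]; exact hsub rfl

open Classical in
noncomputable def ENDv (π : Finset X → ℝ) (ρ : X → ℝ) (z : X) : ℝ :=
  (insert (0:ℝ) ((univ.filter (fun C : Finset X => IsMaxChain (· ≤ ·) (C : Set X) ∧ z ∈ C)).image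
    (fun C => π C - ∑ w ∈ C.filter (fun w => z < w), ρ w))).max' (insert_nonempty _ _)

variable {π : Finset X → ℝ} {ρ : X → ℝ}

lemma ENDv_nonneg (z : X) : 0 ≤ ENDv π ρ z := Finset.le_max' _ _ (mem_insert_self _ _)

lemma le_ENDv {C : Finset X} (hC : IsMaxChain (· ≤ ·) (C : Set X)) {z : X} (hz : z ∈ C) :
    π C - ∑ w ∈ C.filter (fun w => z < w), ρ w ≤ ENDv π ρ z := by
  classical
  apply Finset.le_max'
  apply Finset.mem_insert_of_mem
  refine Finset.mem_image.mpr ⟨C, ?_, rfl⟩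
  simp only [Finset.mem_filter, Finset.mem_univ, true_and]
  exact ⟨hC, hz⟩

lemma ENDv_cases (z : X) : ENDv π ρ z = 0 ∨ ∃ C : Finset X, IsMaxChain (· ≤ ·) (C : Set X) ∧
    z ∈ C ∧ ENDv π ρ z = π C - ∑ w ∈ C.filter (fun w => z < w), ρ w := by
  classical
  have h := Finset.max'_mem
    (insert (0:ℝ) ((univ.filter (fun C : Finset X => IsMaxChain (· ≤ ·) (C : Set X) ∧ z ∈ C)).image
      (fun C => π C - ∑ w ∈ C.filter (fun w => z < w), ρ w))) (insert_nonempty _ _)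
  rw [Finset.mem_insert] at h
  rcases h with h | h
  · exact Or.inl h
  · rw [Finset.mem_image] at h
    obtain ⟨C, hC, hE⟩ := h
    rw [Finset.mem_filter] at hC
    exact Or.inr ⟨C, hC.2.1, hC.2.2, hE.symm⟩

/-- The union of the arcs of `U` together with the initial segment `[0, ENDv x)`. -/
def TSet (π : Finset X → ℝ) (ρ : X → ℝ) (x : X) (U : Finset X) : Set ℝ :=
  {u | u ∈ Set.Ico (0:ℝ) 1 ∧ (u < ENDv π ρ x ∨ ∃ z ∈ U, Int.fract (u - (ENDv π ρ z - ρ z)) < ρ z)}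

end Aux

section MeasAux
open MeasureTheory Set

lemma meas_fract_set (c r : ℝ) :
    MeasurableSet {u : ℝ | Int.fract (u - c) < r} := by
  have h : Measurable fun u : ℝ => Int.fract (u - c) :=
    measurable_fract.comp (measurable_id.sub_const c)
  exact h measurableSet_Iio

lemma fract_set_eq (c r : ℝ) (hr0 : 0 ≤ r) (hr1 : r ≤ 1) :
    {u : ℝ | u ∈ Ico (0:ℝ) 1 ∧ Int.fract (u - c) < r} =
      Ico (Int.fract c) (min 1 (Int.fract c + r)) ∪ Ico 0 (max 0 (Int.fract c + r - 1)) := by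
  have hb0 : 0 ≤ Int.fract c := Int.fract_nonneg c
  have hb1 : Int.fract c < 1 := Int.fract_lt_one c
  set b := Int.fract c with hbdef
  have hfr : ∀ u : ℝ, Int.fract (u - c) = Int.fract (u - b) := by
    intro u
    have h1 : u - c = u - b - (⌊c⌋ : ℤ) := by
      rw [hbdef]; unfold Int.fract; ring
    rw [h1, Int.fract_sub_intCast]
  ext u
  simp only [Set.mem_setOf_eq, Set.mem_Ico, Set.mem_union]
  constructor
  · rintro ⟨⟨hu0, hu1⟩, hlt⟩
    rw [hfr] at hlt
    by_cases hub : b ≤ u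
    · left
      have he : Int.fract (u - b) = u - b := Int.fract_eq_self.mpr ⟨by linarith, by linarith⟩
      rw [he] at hlt
      exact ⟨hub, lt_min (by linarith) (by linarith)⟩
    · right
      push_neg at hub
      have h1 : Int.fract (u - b) = Int.fract (u - b + 1) := by
        rw [show u - b + 1 = u - b - ((-1 : ℤ) : ℝ) by push_cast; ring, Int.fract_sub_intCast]
      have h2 : Int.fract (u - b + 1) = u - b + 1 :=
        Int.fract_eq_self.mpr ⟨by linarith, by linarith⟩
      rw [h1, h2] at hlt
      refine ⟨hu0, lt_of_lt_of_le (by linarith) (le_max_right _ _)⟩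
  · rintro (⟨h1, h2⟩ | ⟨h1, h2⟩)
    · rw [lt_min_iff] at h2
      have he : Int.fract (u - b) = u - b := Int.fract_eq_self.mpr ⟨by linarith, by linarith⟩
      exact ⟨⟨hb0.trans h1, h2.1⟩, by rw [hfr, he]; linarith [h2.2]⟩
    · rcases le_or_gt (b + r - 1) 0 with hc | hc
      · rw [max_eq_left hc] at h2; linarith
      · rw [max_eq_right hc.le] at h2
        have hub : u < b := by linarith
        have hA : Int.fract (u - b) = Int.fract (u - b + 1) := by
          rw [show u - b + 1 = u - b - ((-1 : ℤ) : ℝ) by push_cast; ring, Int.fract_sub_intCast]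
        have hB : Int.fract (u - b + 1) = u - b + 1 :=
          Int.fract_eq_self.mpr ⟨by linarith, by linarith⟩
        refine ⟨⟨h1, by linarith⟩, by rw [hfr, hA, hB]; linarith⟩

lemma vol_fract_lt (c r : ℝ) (hr0 : 0 ≤ r) :
    volume {u : ℝ | u ∈ Ico (0:ℝ) 1 ∧ Int.fract (u - c) < r} = ENNReal.ofReal (min 1 r) := by
  rcases le_or_gt 1 r with hr1 | hr1
  · have hs : {u : ℝ | u ∈ Ico (0:ℝ) 1 ∧ Int.fract (u - c) < r} = Ico (0:ℝ) 1 := by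
      ext u
      exact ⟨fun h => h.1, fun h : u ∈ Ico (0:ℝ) 1 => ⟨h, lt_of_lt_of_le (Int.fract_lt_one _) hr1⟩⟩
    rw [hs, Real.volume_Ico, min_eq_left hr1]; norm_num
  · rw [fract_set_eq c r hr0 hr1.le]
    have hb0 : 0 ≤ Int.fract c := Int.fract_nonneg c
    have hb1 : Int.fract c < 1 := Int.fract_lt_one c
    have hdisj : Disjoint (Ico (Int.fract c) (min 1 (Int.fract c + r)))
        (Ico (0:ℝ) (max 0 (Int.fract c + r - 1))) := by
      rw [Set.disjoint_right]
      rintro u ⟨h1, h2⟩ ⟨h3, _⟩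
      have : max 0 (Int.fract c + r - 1) ≤ Int.fract c :=
        max_le hb0 (by linarith)
      linarith
    rw [measure_union hdisj measurableSet_Ico, Real.volume_Ico, Real.volume_Ico]
    rcases le_or_gt (Int.fract c + r) 1 with hc | hc
    · rw [min_eq_right hc, max_eq_left (by linarith)]
      rw [min_eq_right hr1.le]
      simp only [sub_zero]
      rw [show Int.fract c + r - Int.fract c = r by ring]
      simp
    · rw [min_eq_left hc.le, max_eq_right (by linarith : (0:ℝ) ≤ Int.fract c + r - 1)]
      rw [min_eq_right hr1.le, sub_zero,
        ← ENNReal.ofReal_add (by linarith) (by linarith)]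
      ring_nf
end MeasAux

section ML

variable {X : Type*} [Fintype X] [Nonempty X] [DecidableEq X] [PartialOrder X]
  [DecidableRel (· ≤ · : X → X → Prop)]

lemma main_lemma (ρ : X → ℝ) (hρ0 : ∀ x, 0 ≤ ρ x) (hρ1 : ∀ x, ρ x ≤ 1)
    (π : Finset X → ℝ)
    (hπ1 : ∀ C : Finset X, IsMaxChain (· ≤ ·) (C : Set X) → π C ≤ 1)
    (hcons : ∀ C1 C2 : Finset X, IsMaxChain (· ≤ ·) (C1 : Set X) →
      IsMaxChain (· ≤ ·) (C2 : Set X) → ∀ x ∈ C1 ∩ C2,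
      π C1 + π C2 =
        π (C1.filter (· ≤ x) ∪ C2.filter (x ≤ ·)) +
        π (C2.filter (· ≤ x) ∪ C1.filter (x ≤ ·))) :
    ∀ n : ℕ, ∀ x : X, ∀ U : Finset X, U.card = n → x ∈ U →
      ∀ C : Finset X, IsMaxChain (· ≤ ·) (C : Set X) → C.filter (fun z => x ≤ z) = U →
      π C ≤ (volume (TSet π ρ x U)).toReal := by
  have hTsub : ∀ (x : X) (U : Finset X), TSet π ρ x U ⊆ Set.Ico (0:ℝ) 1 :=
    fun x U u hu => hu.1
  have hTfin : ∀ (x : X) (U : Finset X), volume (TSet π ρ x U) ≠ ⊤ := by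
    intro x U
    refine ne_top_of_le_ne_top ?_ (measure_mono (hTsub x U))
    rw [Real.volume_Ico]; exact ENNReal.ofReal_ne_top
  have hTlow : ∀ (x : X) (U : Finset X),
      min 1 (ENDv π ρ x) ≤ (volume (TSet π ρ x U)).toReal := by
    intro x U
    have hsub : Set.Ico (0:ℝ) (min 1 (ENDv π ρ x)) ⊆ TSet π ρ x U := by
      rintro u ⟨h0, h1⟩
      exact ⟨⟨h0, lt_of_lt_of_le h1 (min_le_left _ _)⟩,
        Or.inl (lt_of_lt_of_le h1 (min_le_right _ _))⟩
    have h2 := ENNReal.toReal_mono (hTfin x U) (measure_mono hsub)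
    rwa [Real.volume_Ico, sub_zero,
      ENNReal.toReal_ofReal (le_min zero_le_one (ENDv_nonneg x))] at h2
  intro n
  induction n using Nat.strong_induction_on with
  | _ n IH =>
  intro x U hcard hxU C hC hCU
  have hxF : x ∈ C.filter (fun z => x ≤ z) := by rw [hCU]; exact hxU
  have hxC : x ∈ C := (Finset.mem_filter.mp hxF).1
  have hUC : U ⊆ C := by rw [← hCU]; exact Finset.filter_subset _ C
  rcases Finset.eq_empty_or_nonempty (U.erase x) with hU' | hU'
  · -- base case : U = {x}
    have hUx : U = {x} := by
      apply Finset.eq_singleton_iff_unique_mem.mpr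
      refine ⟨hxU, fun z hz => ?_⟩
      by_contra hne
      have : z ∈ U.erase x := Finset.mem_erase.mpr ⟨hne, hz⟩
      rw [hU'] at this
      simp at this
    have hfilt : C.filter (fun w => x < w) = ∅ := by
      rw [Finset.eq_empty_iff_forall_notMem]
      intro w hw
      rw [Finset.mem_filter] at hw
      have hwU : w ∈ U := by rw [← hCU, Finset.mem_filter]; exact ⟨hw.1, hw.2.le⟩
      rw [hUx, Finset.mem_singleton] at hwU
      subst hwU
      exact lt_irrefl _ hw.2
    have hE : π C ≤ ENDv π ρ x := by
      have h := le_ENDv (π := π) (ρ := ρ) hC hxC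
      rw [hfilt] at h
      simpa using h
    have hmin : π C ≤ min 1 (ENDv π ρ x) := le_min (hπ1 C hC) hE
    exact hmin.trans (hTlow x U)
  · -- inductive step
    obtain ⟨y, hyU', hyle⟩ :=
      mc_least_sub hC (Finset.Subset.trans (Finset.erase_subset _ _) hUC) hU'
    have hyU : y ∈ U := Finset.mem_of_mem_erase hyU'
    have hyC : y ∈ C := hUC hyU
    have hyF : y ∈ C.filter (fun z => x ≤ z) := by rw [hCU]; exact hyU
    have hxy : x < y :=
      lt_of_le_of_ne (Finset.mem_filter.mp hyF).2 ((Finset.mem_erase.mp hyU').1).symm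
    have hU'eq : C.filter (fun z => y ≤ z) = U.erase x := by
      ext z
      simp only [Finset.mem_filter, Finset.mem_erase]
      constructor
      · rintro ⟨hzC, hyz⟩
        have hzU : z ∈ U := by rw [← hCU, Finset.mem_filter]; exact ⟨hzC, hxy.le.trans hyz⟩
        exact ⟨by rintro rfl; exact absurd hyz hxy.not_ge, hzU⟩
      · rintro ⟨hzx, hzU⟩
        exact ⟨hUC hzU, hyle z (Finset.mem_erase.mpr ⟨hzx, hzU⟩)⟩
    have hcard' : (U.erase x).card < n := by
      rw [← hcard]; exact Finset.card_erase_lt_of_mem hxU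
    rcases le_or_gt (ENDv π ρ y) (ENDv π ρ x + ρ y) with hcase | hcase
    · -- connected case
      have hsub1 : TSet π ρ y (U.erase x) ⊆ TSet π ρ x U := by
        rintro u ⟨huI, hu⟩
        refine ⟨huI, ?_⟩
        rcases hu with hlt | ⟨z, hz, hfr⟩
        · rcases lt_or_ge u (ENDv π ρ x) with h | h
          · exact Or.inl h
          · refine Or.inr ⟨y, hyU, ?_⟩
            have h1 : Int.fract (u - (ENDv π ρ y - ρ y)) = u - (ENDv π ρ y - ρ y) :=
              Int.fract_eq_self.mpr ⟨by linarith, by linarith [hρ1 y]⟩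
            rw [h1]; linarith
        · exact Or.inr ⟨z, Finset.mem_of_mem_erase hz, hfr⟩
      have h1 := IH (U.erase x).card hcard' y (U.erase x) rfl hyU' C hC hU'eq
      have h2 := ENNReal.toReal_mono (hTfin x U) (measure_mono hsub1)
      linarith
    · -- gap case
      have hEy : (0:ℝ) < ENDv π ρ y := by
        linarith [ENDv_nonneg (π := π) (ρ := ρ) x, hρ0 y]
      obtain ⟨C2, hC2, hyC2, hEyeq⟩ := (ENDv_cases (π := π) (ρ := ρ) y).resolve_left hEy.ne'
      have hAB := hcons C2 C hC2 hC y (Finset.mem_inter.mpr ⟨hyC2, hyC⟩)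
      set A := C2.filter (· ≤ y) ∪ C.filter (y ≤ ·) with hAdef
      set B := C.filter (· ≤ y) ∪ C2.filter (y ≤ ·) with hBdef
      have hA : IsMaxChain (· ≤ ·) (A : Set X) := mc_recomb hC2 hC hyC2 hyC
      have hB : IsMaxChain (· ≤ ·) (B : Set X) := mc_recomb hC hC2 hyC hyC2
      have hAU' : A.filter (fun z => y ≤ z) = U.erase x := by
        rw [← hU'eq]
        ext z
        simp only [hAdef, Finset.mem_filter, Finset.mem_union]
        constructor
        · rintro ⟨hz | hz, hyz⟩
          · have hzy : z = y := le_antisymm hz.2 hyz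
            subst hzy
            exact ⟨hyC, le_rfl⟩
          · exact hz
        · rintro ⟨hzC, hyz⟩
          exact ⟨Or.inr ⟨hzC, hyz⟩, hyz⟩
      have hyA : y ∈ A := Finset.mem_union_left _ (Finset.mem_filter.mpr ⟨hyC2, le_rfl⟩)
      have hπA := IH (U.erase x).card hcard' y (U.erase x) rfl hyU' A hA hAU'
      have hxB : x ∈ B := Finset.mem_union_left _ (Finset.mem_filter.mpr ⟨hxC, hxy.le⟩)
      have hEx := le_ENDv (π := π) (ρ := ρ) hB hxB
      have hBfilt : B.filter (fun w => x < w) = C2.filter (fun w => y ≤ w) := by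
        ext w
        simp only [hBdef, Finset.mem_filter, Finset.mem_union]
        constructor
        · rintro ⟨hw | hw, hxw⟩
          · have hwU : w ∈ U := by rw [← hCU, Finset.mem_filter]; exact ⟨hw.1, hxw.le⟩
            have hwx : w ≠ x := by rintro rfl; exact lt_irrefl _ hxw
            have hyw : y ≤ w := hyle w (Finset.mem_erase.mpr ⟨hwx, hwU⟩)
            have hwy : w = y := le_antisymm hw.2 hyw
            subst hwy
            exact ⟨hyC2, le_rfl⟩
          · exact hw
        · rintro ⟨hwC2, hyw⟩
          exact ⟨Or.inr ⟨hwC2, hyw⟩, lt_of_lt_of_le hxy hyw⟩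
      have hsplit : C2.filter (fun w => y ≤ w) = insert y (C2.filter (fun w => y < w)) := by
        ext w
        simp only [Finset.mem_filter, Finset.mem_insert]
        constructor
        · rintro ⟨hw, hyw⟩
          rcases eq_or_lt_of_le hyw with h | h
          · exact Or.inl h.symm
          · exact Or.inr ⟨hw, h⟩
        · rintro (rfl | ⟨hw, hyw⟩)
          · exact ⟨hyC2, le_rfl⟩
          · exact ⟨hw, hyw.le⟩
      have hsum2 : ∑ w ∈ B.filter (fun w => x < w), ρ w
          = ρ y + ∑ w ∈ C2.filter (fun w => y < w), ρ w := by
        rw [hBfilt, hsplit, Finset.sum_insert (by simp)]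
      rw [hsum2] at hEx
      have hsub2 : TSet π ρ y (U.erase x) ⊆
          TSet π ρ x U ∪ Set.Ico (ENDv π ρ x) (ENDv π ρ y - ρ y) := by
        rintro u ⟨huI, hu⟩
        rcases hu with hlt | ⟨z, hz, hfr⟩
        · rcases lt_or_ge u (ENDv π ρ x) with h | h
          · exact Or.inl ⟨huI, Or.inl h⟩
          · rcases lt_or_ge u (ENDv π ρ y - ρ y) with h2 | h2
            · exact Or.inr ⟨h, h2⟩
            · refine Or.inl ⟨huI, Or.inr ⟨y, hyU, ?_⟩⟩
              have h1 : Int.fract (u - (ENDv π ρ y - ρ y)) = u - (ENDv π ρ y - ρ y) :=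
                Int.fract_eq_self.mpr ⟨by linarith, by linarith [hρ1 y]⟩
              rw [h1]; linarith
        · exact Or.inl ⟨huI, Or.inr ⟨z, Finset.mem_of_mem_erase hz, hfr⟩⟩
      have hgap0 : (0:ℝ) ≤ ENDv π ρ y - ρ y - ENDv π ρ x := by linarith
      have hvol : (volume (TSet π ρ y (U.erase x))).toReal
          ≤ (volume (TSet π ρ x U)).toReal + (ENDv π ρ y - ρ y - ENDv π ρ x) := by
        have hle := (measure_mono (μ := volume) hsub2).trans
          (measure_union_le (μ := volume) (TSet π ρ x U) (Set.Ico (ENDv π ρ x) (ENDv π ρ y - ρ y)))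
        rw [Real.volume_Ico] at hle
        have hfin2 : volume (TSet π ρ x U) + ENNReal.ofReal (ENDv π ρ y - ρ y - ENDv π ρ x) ≠ ⊤ :=
          ENNReal.add_ne_top.mpr ⟨hTfin x U, ENNReal.ofReal_ne_top⟩
        have h3 := ENNReal.toReal_mono hfin2 hle
        rwa [ENNReal.toReal_add (hTfin x U) ENNReal.ofReal_ne_top,
          ENNReal.toReal_ofReal hgap0] at h3
      linarith
end ML

section Omega

variable {X : Type*} [Fintype X] [Nonempty X] [DecidableEq X] [PartialOrder X]
  [DecidableRel (· ≤ · : X → X → Prop)]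

/-- The event that the random set equals `S`. -/
def OmegaSet (π : Finset X → ℝ) (ρ : X → ℝ) (S : Finset X) : Set ℝ :=
  {u | u ∈ Set.Ico (0:ℝ) 1 ∧ ∀ z : X, (Int.fract (u - (ENDv π ρ z - ρ z)) < ρ z ↔ z ∈ S)}

variable (π : Finset X → ℝ) (ρ : X → ℝ)

lemma OmegaSet_sub (S : Finset X) : OmegaSet π ρ S ⊆ Set.Ico (0:ℝ) 1 := fun _ hu => hu.1

lemma OmegaSet_fin (S : Finset X) : volume (OmegaSet π ρ S) ≠ ⊤ := by
  refine ne_top_of_le_ne_top ?_ (measure_mono (OmegaSet_sub π ρ S))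
  rw [Real.volume_Ico]; exact ENNReal.ofReal_ne_top

lemma OmegaSet_meas (S : Finset X) : MeasurableSet (OmegaSet π ρ S) := by
  have heq : OmegaSet π ρ S = Set.Ico (0:ℝ) 1 ∩ ⋂ z : X,
      {u : ℝ | Int.fract (u - (ENDv π ρ z - ρ z)) < ρ z ↔ z ∈ S} := by
    ext u
    simp only [OmegaSet, Set.mem_setOf_eq, Set.mem_inter_iff, Set.mem_iInter]
  rw [heq]
  refine measurableSet_Ico.inter (MeasurableSet.iInter fun z => ?_)
  by_cases hzS : z ∈ S
  · have : {u : ℝ | Int.fract (u - (ENDv π ρ z - ρ z)) < ρ z ↔ z ∈ S}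
        = {u : ℝ | Int.fract (u - (ENDv π ρ z - ρ z)) < ρ z} := by
      ext u; simp [hzS]
    rw [this]; exact meas_fract_set _ _
  · have : {u : ℝ | Int.fract (u - (ENDv π ρ z - ρ z)) < ρ z ↔ z ∈ S}
        = {u : ℝ | Int.fract (u - (ENDv π ρ z - ρ z)) < ρ z}ᶜ := by
      ext u; simp [hzS]
    rw [this]; exact (meas_fract_set _ _).compl

lemma OmegaSet_disj : Set.PairwiseDisjoint (↑(univ : Finset (Finset X))) (OmegaSet π ρ) := by
  intro S _ S' _ hne
  refine Set.disjoint_left.mpr ?_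
  rintro u ⟨_, h2⟩ ⟨_, h2'⟩
  exact hne (Finset.ext fun z => ((h2 z).symm.trans (h2' z)))

end Omega

/-- Main existence theorem (Theorem 1): on a finite nonempty poset with maximal chains `𝒞`,
if `ρ ∈ [0,1]^X` and `π ≤ 1` satisfy `∑_{x∈C} ρ_x ≥ π_C` for every maximal chain `C` and
the conservation law on recombinations of intersecting maximal chains, then there exists a
probability distribution `σ` over subsets of `X` with marginals `ρ` and hitting
probabilities at least `π` on every maximal chain. -/
theorem exists_distribution_on_poset (X : Type*) [Fintype X] [Nonempty X] [DecidableEq X]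
    [PartialOrder X] [DecidableRel (· ≤ · : X → X → Prop)]
    (ρ : X → ℝ) (hρ0 : ∀ x, 0 ≤ ρ x) (hρ1 : ∀ x, ρ x ≤ 1)
    (π : Finset X → ℝ)
    (hπ1 : ∀ C : Finset X, IsMaxChain (· ≤ ·) (C : Set X) → π C ≤ 1)
    (hnec : ∀ C : Finset X, IsMaxChain (· ≤ ·) (C : Set X) → π C ≤ ∑ x ∈ C, ρ x)
    (hcons : ∀ C1 C2 : Finset X, IsMaxChain (· ≤ ·) (C1 : Set X) →
      IsMaxChain (· ≤ ·) (C2 : Set X) → ∀ x ∈ C1 ∩ C2,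
      π C1 + π C2 =
        π (C1.filter (· ≤ x) ∪ C2.filter (x ≤ ·)) +
        π (C2.filter (· ≤ x) ∪ C1.filter (x ≤ ·))) :
    ∃ σ : Finset X → ℝ,
      (∀ S, 0 ≤ σ S) ∧
      (∑ S : Finset X, σ S = 1) ∧
      (∀ x : X, ∑ S ∈ univ.filter (fun S : Finset X => x ∈ S), σ S = ρ x) ∧
      (∀ C : Finset X, IsMaxChain (· ≤ ·) (C : Set X) →
        π C ≤ ∑ S ∈ univ.filter (fun S : Finset X => (S ∩ C).Nonempty), σ S) := by
  classical
  refine ⟨fun S => (volume (OmegaSet π ρ S)).toReal,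
    fun S => ENNReal.toReal_nonneg, ?_, ?_, ?_⟩
  · -- total mass 1
    have hunion : ⋃ S ∈ (univ : Finset (Finset X)), OmegaSet π ρ S = Set.Ico (0:ℝ) 1 := by
      apply Set.Subset.antisymm
      · intro u hu
        simp only [Set.mem_iUnion] at hu
        obtain ⟨S, _, hS⟩ := hu
        exact hS.1
      · intro u hu
        have hm : u ∈ OmegaSet π ρ (univ.filter
            (fun z : X => Int.fract (u - (ENDv π ρ z - ρ z)) < ρ z)) :=
          ⟨hu, fun z => by simp [Finset.mem_filter]⟩
        exact Set.mem_biUnion (Finset.mem_univ _) hm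
    have hsum := measure_biUnion_finset (μ := volume) (OmegaSet_disj π ρ) (fun S _ => OmegaSet_meas π ρ S)
    rw [hunion, Real.volume_Ico] at hsum
    have h2 := congrArg ENNReal.toReal hsum
    rw [ENNReal.toReal_sum (fun S _ => OmegaSet_fin π ρ S)] at h2
    simpa using h2.symm
  · -- marginals
    intro x
    have hunion : ⋃ S ∈ univ.filter (fun S : Finset X => x ∈ S), OmegaSet π ρ S
        = {u : ℝ | u ∈ Set.Ico (0:ℝ) 1 ∧ Int.fract (u - (ENDv π ρ x - ρ x)) < ρ x} := by
      apply Set.Subset.antisymm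
      · intro u hu
        simp only [Set.mem_iUnion] at hu
        obtain ⟨S, hS, huS⟩ := hu
        exact ⟨huS.1, (huS.2 x).mpr (Finset.mem_filter.mp hS).2⟩
      · intro u hu
        have hm : u ∈ OmegaSet π ρ (univ.filter
            (fun z : X => Int.fract (u - (ENDv π ρ z - ρ z)) < ρ z)) :=
          ⟨hu.1, fun z => by simp [Finset.mem_filter]⟩
        refine Set.mem_biUnion ?_ hm
        exact Finset.mem_filter.mpr ⟨Finset.mem_univ _,
          Finset.mem_filter.mpr ⟨Finset.mem_univ _, hu.2⟩⟩
    have hsum := measure_biUnion_finset (μ := volume)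
      (s := univ.filter (fun S : Finset X => x ∈ S))
      ((OmegaSet_disj π ρ).subset (Finset.coe_subset.mpr (Finset.subset_univ _)))
      (fun S _ => OmegaSet_meas π ρ S)
    rw [hunion, vol_fract_lt _ _ (hρ0 x), min_eq_right (hρ1 x)] at hsum
    have h2 := congrArg ENNReal.toReal hsum
    rw [ENNReal.toReal_sum (fun S _ => OmegaSet_fin π ρ S),
      ENNReal.toReal_ofReal (hρ0 x)] at h2
    exact h2.symm
  · -- hitting probabilities
    intro C hC
    obtain ⟨m, hmC, hmle⟩ := mc_least_sub hC (Finset.Subset.refl C) (mc_nonempty hC)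
    have hfiltC : C.filter (fun z => m ≤ z) = C := Finset.filter_true_of_mem hmle
    have hML := main_lemma ρ hρ0 hρ1 π hπ1 hcons C.card m C rfl hmC C hC hfiltC
    have hEm : ENDv π ρ m ≤ ρ m := by
      rcases ENDv_cases (π := π) (ρ := ρ) m with h0 | ⟨C', hC', hmC', hE'⟩
      · rw [h0]; exact hρ0 m
      · rw [hE']
        have hfilt' : C'.filter (fun w => ¬ m < w) = {m} := by
          ext w
          simp only [Finset.mem_filter, Finset.mem_singleton]
          constructor
          · rintro ⟨hwC', hnlt⟩
            rcases mc_chain hC' hmC' hwC' with hmw | hwm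
            · exact ((lt_or_eq_of_le hmw).elim (fun h => absurd h hnlt) (fun h => h.symm))
            · exact mc_least_minimal hC hmle hwm
          · rintro rfl
            exact ⟨hmC', lt_irrefl _⟩
        have hsum := Finset.sum_filter_add_sum_filter_not C' (fun w => m < w) ρ
        rw [hfilt', Finset.sum_singleton] at hsum
        have hne := hnec C' hC'
        linarith
    have hsubH : TSet π ρ m C ⊆
        ⋃ S ∈ univ.filter (fun S : Finset X => (S ∩ C).Nonempty), OmegaSet π ρ S := by
      rintro u ⟨huI, hu⟩
      have harc : ∃ z ∈ C, Int.fract (u - (ENDv π ρ z - ρ z)) < ρ z := by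
        rcases hu with hlt | h
        · refine ⟨m, hmC, ?_⟩
          have h1 : Int.fract (u - (ENDv π ρ m - ρ m)) = u - (ENDv π ρ m - ρ m) :=
            Int.fract_eq_self.mpr ⟨by linarith [huI.1], by linarith [hρ1 m]⟩
          rw [h1]; linarith
        · exact h
      obtain ⟨z, hzC, hz⟩ := harc
      have hm : u ∈ OmegaSet π ρ (univ.filter
          (fun w : X => Int.fract (u - (ENDv π ρ w - ρ w)) < ρ w)) :=
        ⟨huI, fun w => by simp [Finset.mem_filter]⟩
      refine Set.mem_biUnion ?_ hm
      refine Finset.mem_filter.mpr ⟨Finset.mem_univ _, ⟨z, Finset.mem_inter.mpr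
        ⟨Finset.mem_filter.mpr ⟨Finset.mem_univ _, hz⟩, hzC⟩⟩⟩
    have hsum := measure_biUnion_finset (μ := volume)
      (s := univ.filter (fun S : Finset X => (S ∩ C).Nonempty))
      ((OmegaSet_disj π ρ).subset (Finset.coe_subset.mpr (Finset.subset_univ _)))
      (fun S _ => OmegaSet_meas π ρ S)
    have hfinU : volume (⋃ S ∈ univ.filter (fun S : Finset X => (S ∩ C).Nonempty),
        OmegaSet π ρ S) ≠ ⊤ := by
      refine ne_top_of_le_ne_top (?_ : volume (Set.Ico (0:ℝ) 1) ≠ ⊤) (measure_mono ?_)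
      · rw [Real.volume_Ico]; exact ENNReal.ofReal_ne_top
      intro u hu
      simp only [Set.mem_iUnion] at hu
      obtain ⟨S, _, hS⟩ := hu
      exact hS.1
    have h1 := ENNReal.toReal_mono hfinU (measure_mono hsubH)
    have h2 := congrArg ENNReal.toReal hsum
    rw [ENNReal.toReal_sum (fun S _ => OmegaSet_fin π ρ S)] at h2
    calc π C ≤ (volume (TSet π ρ m C)).toReal := hML
    _ ≤ _ := h1
    _ = _ := h2
end

section
/- Under the hypotheses of the previous statement, the optimal value of the LP minimizing ∑_S σ_S subject to σ ≥ 0, ∑_{S∋x} σ_S = ρ_x for all x ∈ X, and ∑_{S:|S∩C|≥2} σ_S(|S∩C|−1) ≤ ∑_{x∈C} ρ_x − π_C for all maximal chains C, equals max{max_{x∈X} ρ_x, max_{C∈𝒞} π_C}. -/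
open Finset

set_option linter.unusedSectionVars false

namespace QLP

variable {X : Type*} [Fintype X] [DecidableEq X] [PartialOrder X]
  [DecidableRel (· ≤ · : X → X → Prop)]

/-- `C` is a maximal chain (as a finset). -/
def isMC (C : Finset X) : Prop := IsMaxChain (· ≤ ·) (C : Set X)

lemma isMC.comp {C : Finset X} (h : isMC C) {x y : X} (hx : x ∈ C) (hy : y ∈ C) :
    x ≤ y ∨ y ≤ x := by
  rcases eq_or_ne x y with rfl | hne
  · exact Or.inl le_rfl
  · exact h.1 (by exact_mod_cast hx) (by exact_mod_cast hy) hne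

lemma isMC.mem_of_comp {C : Finset X} (h : isMC C) {z : X}
    (hz : ∀ c ∈ C, z ≤ c ∨ c ≤ z) : z ∈ C := by
  have hch : IsChain (· ≤ ·) (insert z (C : Set X)) := by
    refine h.1.insert ?_
    intro c hc _
    exact hz c (by exact_mod_cast hc)
  have := h.2 hch (Set.subset_insert _ _)
  have : z ∈ (C : Set X) := this ▸ Set.mem_insert z _
  exact_mod_cast this

lemma exists_mc_through (x : X) : ∃ C : Finset X, isMC C ∧ x ∈ C := by
  obtain ⟨M, hM, hxM⟩ := (IsChain.singleton (r := (· ≤ · : X → X → Prop)) (a := x)).exists_maxChain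
  refine ⟨M.toFinite.toFinset, ?_, ?_⟩
  · unfold isMC; rwa [Set.Finite.coe_toFinset]
  · rw [Set.Finite.mem_toFinset]; exact hxM (Set.mem_singleton x)

lemma isMC.nonempty [Nonempty X] {C : Finset X} (h : isMC C) : C.Nonempty := by
  by_contra hne
  rw [not_nonempty_iff_eq_empty] at hne
  obtain ⟨x⟩ := ‹Nonempty X›
  have : x ∈ C := h.mem_of_comp (by simp [hne])
  simp [hne] at this

/-- recombination of two maximal chains at a common point is a maximal chain -/
lemma isMC.recomb {C₁ C₂ : Finset X} (h₁ : isMC C₁) (h₂ : isMC C₂) {x : X}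
    (hx₁ : x ∈ C₁) (hx₂ : x ∈ C₂) :
    isMC (C₁.filter (· ≤ x) ∪ C₂.filter (x ≤ ·)) := by
  set D := C₁.filter (· ≤ x) ∪ C₂.filter (x ≤ ·) with hD
  have hmemD : ∀ z, z ∈ D ↔ (z ∈ C₁ ∧ z ≤ x) ∨ (z ∈ C₂ ∧ x ≤ z) := by
    intro z; simp [hD, mem_filter, mem_union]
  have hchain : IsChain (· ≤ ·) (D : Set X) := by
    intro a ha b hb hne
    have ha' := (hmemD a).1 (by exact_mod_cast ha)
    have hb' := (hmemD b).1 (by exact_mod_cast hb)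
    rcases ha' with ⟨ha1, hax⟩ | ⟨ha2, hxa⟩ <;> rcases hb' with ⟨hb1, hbx⟩ | ⟨hb2, hxb⟩
    · rcases h₁.comp ha1 hb1 with h | h
      · exact Or.inl h
      · exact Or.inr h
    · exact Or.inl (hax.trans hxb)
    · exact Or.inr (hbx.trans hxa)
    · rcases h₂.comp ha2 hb2 with h | h
      · exact Or.inl h
      · exact Or.inr h
  constructor
  · exact hchain
  · intro t ht hsub
    refine le_antisymm hsub ?_
    intro z hz
    have hxD : x ∈ D := (hmemD x).2 (Or.inl ⟨hx₁, le_rfl⟩)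
    have hcompx : z ≤ x ∨ x ≤ z := by
      rcases eq_or_ne z x with rfl | hne
      · exact Or.inl le_rfl
      · exact (ht hz (hsub (by exact_mod_cast hxD)) hne)
    rcases hcompx with hzx | hxz
    · -- z ≤ x : show z ∈ C₁
      have hz1 : z ∈ C₁ := by
        refine h₁.mem_of_comp ?_
        intro c hc
        rcases h₁.comp hc hx₁ with hcx | hxc
        · -- c ≤ x, so c ∈ D ⊆ t, comparable to z via t chain
          have hcD : c ∈ D := (hmemD c).2 (Or.inl ⟨hc, hcx⟩)
          rcases eq_or_ne z c with rfl | hne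
          · exact Or.inl le_rfl
          · exact ht hz (hsub (by exact_mod_cast hcD)) hne
        · exact Or.inl (hzx.trans hxc)
      exact_mod_cast (hmemD z).2 (Or.inl ⟨hz1, hzx⟩)
    · have hz2 : z ∈ C₂ := by
        refine h₂.mem_of_comp ?_
        intro c hc
        rcases h₂.comp hc hx₂ with hcx | hxc
        · exact Or.inr (hcx.trans hxz)
        · have hcD : c ∈ D := (hmemD c).2 (Or.inr ⟨hc, hxc⟩)
          rcases eq_or_ne z c with rfl | hne
          · exact Or.inl le_rfl
          · exact ht hz (hsub (by exact_mod_cast hcD)) hne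
      exact_mod_cast (hmemD z).2 (Or.inr ⟨hz2, hxz⟩)


instance : DecidableRel (· < · : X → X → Prop) :=
  fun a b => decidable_of_iff _ (lt_iff_le_not_ge).symm

variable (ρ : X → ℝ) (π : Finset X → ℝ)

/-- sum of `ρ` over the part of `C` strictly above `x`. -/
def Rab (C : Finset X) (x : X) : ℝ := ∑ y ∈ C.filter (fun y => x < y), ρ y

open scoped Classical in
noncomputable def MCs : Finset (Finset X) := univ.filter isMC

lemma mem_MCs {C : Finset X} : C ∈ MCs (X := X) ↔ isMC C := by
  classical simp [MCs]

lemma Rab_nonneg (hρ0 : ∀ x, 0 ≤ ρ x) (C : Finset X) (x : X) : 0 ≤ Rab ρ C x :=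
  Finset.sum_nonneg fun y _ => hρ0 y

/-- the collection of maximal chains through `x`, as a finset; it is nonempty. -/
noncomputable def thru (x : X) : Finset (Finset X) := MCs.filter (fun C => x ∈ C)

lemma thru_nonempty (x : X) : (thru (X := X) x).Nonempty := by
  obtain ⟨C, hC, hx⟩ := exists_mc_through x
  exact ⟨C, by simp [thru, mem_MCs, hC, hx]⟩

lemma mem_thru {x : X} {C : Finset X} : C ∈ thru x ↔ isMC C ∧ x ∈ C := by
  simp [thru, mem_MCs]

/-- `B x`: the maximal "end requirement" at `x`. -/
noncomputable def Bv (x : X) : ℝ :=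
  ((thru x).image (fun C => π C - Rab ρ C x)).max'
    ((thru_nonempty x).image _)

lemma le_Bv {x : X} {C : Finset X} (hC : isMC C) (hx : x ∈ C) :
    π C - Rab ρ C x ≤ Bv ρ π x := by
  rw [Bv]
  exact Finset.le_max' _ _ (mem_image_of_mem (fun C => π C - Rab ρ C x) (mem_thru.2 ⟨hC, hx⟩))

lemma Bv_le {x : X} {b : ℝ} (h : ∀ C, isMC C → x ∈ C → π C - Rab ρ C x ≤ b) :
    Bv ρ π x ≤ b := by
  rw [Bv]
  refine Finset.max'_le _ _ _ ?_
  rintro v hv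
  obtain ⟨C, hC, rfl⟩ := mem_image.1 hv
  obtain ⟨h1, h2⟩ := mem_thru.1 hC
  exact h C h1 h2

lemma Bv_exists (x : X) : ∃ C, isMC C ∧ x ∈ C ∧ Bv ρ π x = π C - Rab ρ C x := by
  rw [Bv]
  obtain ⟨C, hC, h⟩ := mem_image.1
    (Finset.max'_mem ((thru x).image (fun C => π C - Rab ρ C x)) ((thru_nonempty x).image _))
  obtain ⟨h1, h2⟩ := mem_thru.1 hC
  exact ⟨C, h1, h2, h.symm⟩

/-- candidates for `u C x`: maximal chains with the same part below `x` as `C`. -/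
noncomputable def uCand (C : Finset X) (x : X) : Finset (Finset X) :=
  MCs.filter (fun C' => C'.filter (· ≤ x) = C.filter (· ≤ x))

lemma mem_uCand {C C' : Finset X} {x : X} :
    C' ∈ uCand C x ↔ isMC C' ∧ C'.filter (· ≤ x) = C.filter (· ≤ x) := by
  simp [uCand, mem_MCs]

/-- `u C x`: the maximal end requirement among chains agreeing with `C` below `x`. -/
noncomputable def u (C : Finset X) (x : X) : ℝ :=
  if h : (uCand C x).Nonempty then
    ((uCand C x).image (fun C' => π C' - Rab ρ C' x)).max' (h.image _)
  else 0

lemma uCand_self {C : Finset X} {x : X} (hC : isMC C) : C ∈ uCand C x :=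
  mem_uCand.2 ⟨hC, rfl⟩

lemma le_u {C C' : Finset X} {x : X} (hC' : isMC C')
    (hagree : C'.filter (· ≤ x) = C.filter (· ≤ x)) :
    π C' - Rab ρ C' x ≤ u ρ π C x := by
  have hne : (uCand C x).Nonempty := ⟨C', mem_uCand.2 ⟨hC', hagree⟩⟩
  rw [u, dif_pos hne]
  exact Finset.le_max' _ _ (mem_image_of_mem (fun C' => π C' - Rab ρ C' x) (mem_uCand.2 ⟨hC', hagree⟩))

lemma u_le {C : Finset X} {x : X} {b : ℝ} (hC : isMC C)
    (h : ∀ C', isMC C' → C'.filter (· ≤ x) = C.filter (· ≤ x) → π C' - Rab ρ C' x ≤ b) :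
    u ρ π C x ≤ b := by
  have hne : (uCand C x).Nonempty := ⟨C, uCand_self hC⟩
  rw [u, dif_pos hne]
  refine Finset.max'_le _ _ _ ?_
  rintro v hv
  obtain ⟨C', hC', rfl⟩ := mem_image.1 hv
  obtain ⟨h1, h2⟩ := mem_uCand.1 hC'
  exact h C' h1 h2

lemma u_exists {C : Finset X} {x : X} (hC : isMC C) :
    ∃ C', isMC C' ∧ C'.filter (· ≤ x) = C.filter (· ≤ x) ∧
      u ρ π C x = π C' - Rab ρ C' x := by
  have hne : (uCand C x).Nonempty := ⟨C, uCand_self hC⟩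
  rw [u, dif_pos hne]
  obtain ⟨C', hC', h⟩ := mem_image.1
    (Finset.max'_mem ((uCand C x).image (fun C' => π C' - Rab ρ C' x)) (hne.image _))
  obtain ⟨h1, h2⟩ := mem_uCand.1 hC'
  exact ⟨C', h1, h2, h.symm⟩

lemma u_le_Bv {C : Finset X} {x : X} (hC : isMC C) (hx : x ∈ C) :
    u ρ π C x ≤ Bv ρ π x := by
  refine u_le ρ π hC ?_
  intro C' h1 h2
  have hxC' : x ∈ C' := by
    have : x ∈ C.filter (· ≤ x) := mem_filter.2 ⟨hx, le_rfl⟩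
    rw [← h2] at this
    exact (mem_filter.1 this).1
  exact le_Bv ρ π h1 hxC'

lemma u_ge_pi {C : Finset X} {x : X} (hC : isMC C) :
    π C - Rab ρ C x ≤ u ρ π C x := le_u ρ π hC rfl

/-- chains agreeing below `x` also agree below any `y ≤ x`. -/
lemma agree_below {C C' : Finset X} {x y : X} (hyx : y ≤ x)
    (hagree : C'.filter (· ≤ x) = C.filter (· ≤ x)) :
    C'.filter (· ≤ y) = C.filter (· ≤ y) := by
  ext z
  constructor
  · intro hz
    obtain ⟨hz1, hz2⟩ := mem_filter.1 hz
    have : z ∈ C.filter (· ≤ x) := hagree ▸ (mem_filter.2 ⟨hz1, hz2.trans hyx⟩)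
    exact mem_filter.2 ⟨(mem_filter.1 this).1, hz2⟩
  · intro hz
    obtain ⟨hz1, hz2⟩ := mem_filter.1 hz
    have : z ∈ C'.filter (· ≤ x) := hagree.symm ▸ (mem_filter.2 ⟨hz1, hz2.trans hyx⟩)
    exact mem_filter.2 ⟨(mem_filter.1 this).1, hz2⟩

lemma mem_of_agree {C C' : Finset X} {x : X} (hx : x ∈ C)
    (hagree : C'.filter (· ≤ x) = C.filter (· ≤ x)) : x ∈ C' := by
  have : x ∈ C'.filter (· ≤ x) := hagree.symm ▸ (mem_filter.2 ⟨hx, le_rfl⟩)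
  exact (mem_filter.1 this).1

/-- for a chain, everything not below `x` is strictly above. -/
lemma filter_not_le {C : Finset X} (hC : isMC C) (x : X) (hx : x ∈ C) :
    C.filter (fun z => ¬ z ≤ x) = C.filter (fun z => x < z) := by
  ext z
  simp only [mem_filter, and_congr_right_iff]
  intro hz
  constructor
  · intro h
    rcases hC.comp hz hx with h' | h'
    · exact absurd h' h
    · exact lt_of_le_of_ne h' (fun he => h (he ▸ le_rfl))
  · intro h hzx
    exact absurd hzx (not_le_of_gt h)

lemma sum_split {C : Finset X} (hC : isMC C) {x : X} (hx : x ∈ C) :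
    ∑ y ∈ C, ρ y = (∑ y ∈ C.filter (· ≤ x), ρ y) + Rab ρ C x := by
  rw [Rab, ← filter_not_le hC x hx]
  exact (Finset.sum_filter_add_sum_filter_not C _ ρ).symm

/-- base case: if `C` has nothing below `x`, then `u C x ≤ ρ x`. -/
lemma u_base (hρ0 : ∀ x, 0 ≤ ρ x)
    (hnec : ∀ C : Finset X, isMC C → π C ≤ ∑ x ∈ C, ρ x)
    {C : Finset X} (hC : isMC C) {x : X} (hx : x ∈ C)
    (hbase : C.filter (· ≤ x) = {x}) : u ρ π C x ≤ ρ x := by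
  refine u_le ρ π hC ?_
  intro C' hC' hagree
  have h1 : π C' ≤ ∑ y ∈ C', ρ y := hnec C' hC'
  have hxC' : x ∈ C' := mem_of_agree hx hagree
  rw [sum_split ρ hC' hxC', hagree, hbase] at h1
  simp only [Finset.sum_singleton] at h1
  linarith

/-- key step facts: if `y` is the element of `C` immediately below `x`. -/
structure Consec (C : Finset X) (x y : X) : Prop where
  hC : isMC C
  hxC : x ∈ C
  hyC : y ∈ C
  hyx : y < x
  hstep : C.filter (· ≤ x) = insert x (C.filter (· ≤ y))

/-- for chains agreeing with `C` below `x`, the part above `y` is the part above `x` plus `x`. -/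
lemma consec_rab {C C' : Finset X} {x y : X} (hc : Consec C x y) (hC' : isMC C')
    (hagree : C'.filter (· ≤ x) = C.filter (· ≤ x)) :
    Rab ρ C' y = ρ x + Rab ρ C' x := by
  have hxC' : x ∈ C' := mem_of_agree hc.hxC hagree
  have hfilt : C'.filter (fun z => y < z) = insert x (C'.filter (fun z => x < z)) := by
    ext z
    simp only [mem_filter, mem_insert]
    constructor
    · rintro ⟨hz1, hz2⟩
      rcases hC'.comp hz1 hxC' with h | h
      · have : z ∈ C.filter (· ≤ x) := hagree ▸ mem_filter.2 ⟨hz1, h⟩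
        rw [hc.hstep] at this
        rcases mem_insert.1 this with h' | h'
        · exact Or.inl h'
        · exact absurd (mem_filter.1 h').2 (not_le_of_gt hz2)
      · rcases lt_or_eq_of_le h with h' | h'
        · exact Or.inr ⟨hz1, h'⟩
        · exact Or.inl h'.symm
    · rintro (rfl | ⟨hz1, hz2⟩)
      · exact ⟨hxC', hc.hyx⟩
      · exact ⟨hz1, hc.hyx.trans hz2⟩
  rw [Rab, hfilt, Finset.sum_insert (by simp), ← Rab]

/-- (K1): going one step down loses at most `ρ x`. -/
lemma K1 {C : Finset X} {x y : X} (hc : Consec C x y) :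
    u ρ π C x - ρ x ≤ u ρ π C y := by
  obtain ⟨C', hC', hagree, hval⟩ := u_exists ρ π (x := x) hc.hC
  have h1 : C'.filter (· ≤ y) = C.filter (· ≤ y) := agree_below hc.hyx.le hagree
  have h2 : Rab ρ C' y = ρ x + Rab ρ C' x := consec_rab ρ hc hC' hagree
  have := le_u ρ π (C := C) (x := y) hC' h1
  rw [h2] at this
  linarith

/-- (K2): the conservation law inequality. -/
lemma K2 {C : Finset X} {x y : X} (hc : Consec C x y)
    (hcons : ∀ C1 C2 : Finset X, isMC C1 → isMC C2 → ∀ z ∈ C1 ∩ C2,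
      π C1 + π C2 =
        π (C1.filter (· ≤ z) ∪ C2.filter (z ≤ ·)) +
        π (C2.filter (· ≤ z) ∪ C1.filter (z ≤ ·))) :
    u ρ π C x + Bv ρ π y ≤ u ρ π C y + Bv ρ π x := by
  obtain ⟨Cu, hCu, hagree, hvalu⟩ := u_exists ρ π (x := x) hc.hC
  obtain ⟨Cb, hCb, hyCb, hvalb⟩ := Bv_exists ρ π y
  have hxCu : x ∈ Cu := mem_of_agree hc.hxC hagree
  have hyCu : y ∈ Cu := by
    have : y ∈ C.filter (· ≤ x) := mem_filter.2 ⟨hc.hyC, hc.hyx.le⟩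
    exact (mem_filter.1 (hagree.symm ▸ this)).1
  -- the two recombined chains
  set D1 : Finset X := Cb.filter (· ≤ y) ∪ Cu.filter (y ≤ ·) with hD1
  set D2 : Finset X := Cu.filter (· ≤ y) ∪ Cb.filter (y ≤ ·) with hD2
  have hD1mc : isMC D1 := hCb.recomb hCu hyCb hyCu
  have hD2mc : isMC D2 := hCu.recomb hCb hyCu hyCb
  have hrec := hcons Cb Cu hCb hCu y (mem_inter.2 ⟨hyCb, hyCu⟩)
  -- D1 contains x and has the same part above x as Cu
  have hxD1 : x ∈ D1 := mem_union_right _ (mem_filter.2 ⟨hxCu, hc.hyx.le⟩)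
  have hD1ab : D1.filter (fun z => x < z) = Cu.filter (fun z => x < z) := by
    ext z
    simp only [hD1, mem_union, mem_filter]
    constructor
    · rintro ⟨⟨_, hzy⟩ | ⟨hz1, _⟩, hz2⟩
      · exact absurd (hzy.trans hc.hyx.le) (not_le_of_gt hz2)
      · exact ⟨hz1, hz2⟩
    · rintro ⟨hz1, hz2⟩
      exact ⟨Or.inr ⟨hz1, hc.hyx.le.trans hz2.le⟩, hz2⟩
  have hB1 : π D1 - Rab ρ Cu x ≤ Bv ρ π x := by
    have := le_Bv ρ π (C := D1) hD1mc hxD1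
    rwa [Rab, hD1ab, ← Rab] at this
  -- D2 agrees with C below y and has the same part above y as Cb
  have hD2low : D2.filter (· ≤ y) = C.filter (· ≤ y) := by
    have h1 : D2.filter (· ≤ y) = Cu.filter (· ≤ y) := by
      ext z
      simp only [hD2, mem_union, mem_filter]
      constructor
      · rintro ⟨⟨hz1, _⟩ | ⟨hz3, hz4⟩, hz2⟩
        · exact ⟨hz1, hz2⟩
        · have : z = y := le_antisymm hz2 hz4
          exact ⟨this ▸ hyCu, hz2⟩
      · rintro ⟨hz1, hz2⟩
        exact ⟨Or.inl ⟨hz1, hz2⟩, hz2⟩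
    rw [h1]
    exact agree_below hc.hyx.le hagree
  have hD2ab : D2.filter (fun z => y < z) = Cb.filter (fun z => y < z) := by
    ext z
    simp only [hD2, mem_union, mem_filter]
    constructor
    · rintro ⟨⟨_, hz3⟩ | ⟨hz1, _⟩, hz2⟩
      · exact absurd hz3 (not_le_of_gt hz2)
      · exact ⟨hz1, hz2⟩
    · rintro ⟨hz1, hz2⟩
      exact ⟨Or.inr ⟨hz1, hz2.le⟩, hz2⟩
  have hu2 : π D2 - Rab ρ Cb y ≤ u ρ π C y := by
    have := le_u ρ π (C := C) (x := y) hD2mc hD2low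
    rwa [Rab, hD2ab, ← Rab] at this
  have hsums : π Cb + π Cu = π D1 + π D2 := hrec
  rw [hvalu, hvalb]
  linarith

section Vdef
variable [Nonempty X]

/-- the optimal value `v = max(max ρ, max π)`. -/
noncomputable def vmax : ℝ :=
  ((univ.image ρ) ∪ ((MCs (X := X)).image π)).max'
    (Finset.Nonempty.inl ((univ_nonempty).image ρ))

lemma rho_le_v (x : X) : ρ x ≤ vmax ρ π := by
  refine Finset.le_max' _ _ ?_
  exact mem_union_left _ (mem_image_of_mem ρ (mem_univ x))

lemma pi_le_v {C : Finset X} (hC : isMC C) : π C ≤ vmax ρ π := by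
  refine Finset.le_max' _ _ ?_
  exact mem_union_right _ (mem_image_of_mem π (mem_MCs.2 hC))

lemma v_attained :
    (∃ x : X, vmax ρ π = ρ x) ∨ (∃ C : Finset X, isMC C ∧ vmax ρ π = π C) := by
  have := Finset.max'_mem ((univ.image ρ) ∪ ((MCs (X := X)).image π))
    (Finset.Nonempty.inl ((univ_nonempty).image ρ))
  rw [mem_union] at this
  rcases this with h | h
  · obtain ⟨x, _, hx⟩ := mem_image.1 h
    exact Or.inl ⟨x, hx.symm⟩
  · obtain ⟨C, hC, hx⟩ := mem_image.1 h
    exact Or.inr ⟨C, mem_MCs.1 hC, hx.symm⟩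

lemma v_nonneg (hρ0 : ∀ x, 0 ≤ ρ x) : 0 ≤ vmax ρ π := by
  obtain ⟨x⟩ := ‹Nonempty X›
  exact (hρ0 x).trans (rho_le_v ρ π x)

lemma Bv_le_v (hρ0 : ∀ x, 0 ≤ ρ x) (x : X) : Bv ρ π x ≤ vmax ρ π := by
  refine Bv_le ρ π ?_
  intro C hC _
  have h1 : 0 ≤ Rab ρ C x := Rab_nonneg ρ hρ0 C x
  have h2 := pi_le_v ρ π hC
  linarith

/-- left endpoint of the arc of `x`. -/
noncomputable def av (x : X) : ℝ := max 0 (Bv ρ π x - ρ x)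

/-- right endpoint of the arc of `x`. -/
noncomputable def Ev (x : X) : ℝ := av ρ π x + ρ x

lemma av_nonneg (x : X) : 0 ≤ av ρ π x := le_max_left _ _

lemma Ev_eq_max (x : X) : Ev ρ π x = max (ρ x) (Bv ρ π x) := by
  rw [Ev, av]
  rcases le_total (Bv ρ π x) (ρ x) with h | h
  · rw [max_eq_left (by linarith), max_eq_left h]; ring
  · rw [max_eq_right (by linarith), max_eq_right h]; ring

lemma av_le_Ev (hρ0 : ∀ x, 0 ≤ ρ x) (x : X) : av ρ π x ≤ Ev ρ π x := by
  have := hρ0 x; rw [Ev]; linarith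

lemma Ev_le_v (hρ0 : ∀ x, 0 ≤ ρ x) (x : X) : Ev ρ π x ≤ vmax ρ π := by
  rw [Ev_eq_max]
  exact max_le (rho_le_v ρ π x) (Bv_le_v ρ π hρ0 x)

lemma Bv_le_Ev (x : X) : Bv ρ π x ≤ Ev ρ π x := by
  rw [Ev_eq_max]; exact le_max_right _ _

/-- the key identity `min(ρ,B) + a = B`. -/
lemma minB_add_av (x : X) : min (ρ x) (Bv ρ π x) + av ρ π x = Bv ρ π x := by
  rw [av]
  rcases le_total (Bv ρ π x) (ρ x) with h | h
  · rw [min_eq_right h, max_eq_left (by linarith)]; ring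
  · rw [min_eq_left h, max_eq_right (by linarith)]; ring

end Vdef

/-- enumeration of a finite chain. -/
lemma exists_enum [Nonempty X] {C : Finset X} (hC : isMC C) :
    ∃ zz : ℕ → X, (∀ j, j < C.card → zz j ∈ C) ∧
      (∀ i j, i < j → j < C.card → zz i < zz j) ∧
      (∀ y ∈ C, ∃ j, j < C.card ∧ zz j = y) := by
  classical
  set f : X → LinearExtension X := fun x => toLinearExtension x with hf
  have finj : Function.Injective f := fun a b h => h
  set D : Finset (LinearExtension X) := C.image f with hD
  have hcard : D.card = C.card := Finset.card_image_of_injective _ finj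
  set w := D.orderIsoOfFin hcard with hw
  have hCcases : C.card = 0 ∨ 0 < C.card := Nat.eq_zero_or_pos _
  obtain ⟨x0, hx0⟩ : ∃ x0 : X, True := ⟨Classical.arbitrary X, trivial⟩
  set zz : ℕ → X := fun j =>
    if h : j < C.card then
      ((Finset.mem_image.1 (by exact_mod_cast (w ⟨j, h⟩).2 : ((w ⟨j, h⟩ : LinearExtension X) ∈ D))).choose)
    else x0 with hzz
  have hzmem : ∀ j (h : j < C.card), zz j ∈ C ∧ f (zz j) = (w ⟨j, h⟩ : LinearExtension X) := by
    intro j h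
    rw [hzz]
    simp only [dif_pos h]
    have hspec := (Finset.mem_image.1 (by exact_mod_cast (w ⟨j, h⟩).2 :
      ((w ⟨j, h⟩ : LinearExtension X) ∈ D))).choose_spec
    exact ⟨hspec.1, hspec.2⟩
  refine ⟨zz, ?_, ?_, ?_⟩
  · intro j h; exact (hzmem j h).1
  · intro i j hij hj
    have hi : i < C.card := hij.trans hj
    have hwlt : (w ⟨i, hi⟩ : LinearExtension X) < (w ⟨j, hj⟩ : LinearExtension X) := by
      have : (⟨i, hi⟩ : Fin C.card) < ⟨j, hj⟩ := hij
      exact_mod_cast (OrderIso.lt_iff_lt w).2 this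
    have h1 := (hzmem i hi).2
    have h2 := (hzmem j hj).2
    have hne : zz i ≠ zz j := by
      intro he
      have : (w ⟨i, hi⟩ : LinearExtension X) = (w ⟨j, hj⟩ : LinearExtension X) := by
        rw [← h1, he, h2]
      exact absurd this (ne_of_lt hwlt)
    rcases hC.comp (hzmem i hi).1 (hzmem j hj).1 with h | h
    · exact lt_of_le_of_ne h hne
    · exfalso
      have : f (zz j) ≤ f (zz i) := toLinearExtension.monotone h
      rw [h1, h2] at this
      exact absurd (lt_of_lt_of_le hwlt this) (lt_irrefl _)
  · intro y hy
    have hfy : f y ∈ D := mem_image_of_mem f hy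
    set j := w.symm ⟨f y, hfy⟩ with hj
    refine ⟨j.val, j.isLt, ?_⟩
    have : (w ⟨j.val, j.isLt⟩ : LinearExtension X) = f y := by
      have h4 : (⟨j.val, j.isLt⟩ : Fin C.card) = j := Fin.eta _ _
      rw [h4, hj, OrderIso.apply_symm_apply]
    have h2 := (hzmem j.val j.isLt).2
    exact finj (h2.trans this)

/-- Main descent bound along a maximal chain:
`π C ≤ ∑_j (min(E_j, a_{j+1}) - a_j)` with `a_{k} := v`. -/
lemma chain_bound [Nonempty X] (hρ0 : ∀ x, 0 ≤ ρ x)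
    (hnec : ∀ C : Finset X, isMC C → π C ≤ ∑ x ∈ C, ρ x)
    (hcons : ∀ C1 C2 : Finset X, isMC C1 → isMC C2 → ∀ z ∈ C1 ∩ C2,
      π C1 + π C2 =
        π (C1.filter (· ≤ z) ∪ C2.filter (z ≤ ·)) +
        π (C2.filter (· ≤ z) ∪ C1.filter (z ≤ ·)))
    {C : Finset X} (hC : isMC C) {zz : ℕ → X}
    (hmem : ∀ j, j < C.card → zz j ∈ C)
    (hmono : ∀ i j, i < j → j < C.card → zz i < zz j)
    (hsurj : ∀ y ∈ C, ∃ j, j < C.card ∧ zz j = y) :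
    π C ≤ ∑ l ∈ Finset.range C.card,
      (min (Ev ρ π (zz l)) (if l+1 < C.card then av ρ π (zz (l+1)) else vmax ρ π)
        - av ρ π (zz l)) := by
  set k := C.card with hk
  have hk0 : 0 < k := Finset.card_pos.2 (hC.nonempty)
  -- the bottom element
  have hfilt0 : C.filter (· ≤ zz 0) = {zz 0} := by
    ext y
    simp only [mem_filter, mem_singleton]
    constructor
    · rintro ⟨hyC, hyle⟩
      obtain ⟨j, hj, rfl⟩ := hsurj y hyC
      rcases Nat.eq_zero_or_pos j with rfl | hjpos
      · rfl
      · exact absurd hyle (not_le_of_gt (hmono 0 j hjpos hj))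
    · rintro rfl
      exact ⟨hmem 0 hk0, le_rfl⟩
  have hconsec : ∀ j, j + 1 < k → Consec C (zz (j+1)) (zz j) := by
    intro j hj1
    have hj : j < k := Nat.lt_of_succ_lt hj1
    refine ⟨hC, hmem _ hj1, hmem _ hj, hmono j (j+1) (Nat.lt_succ_self j) hj1, ?_⟩
    ext y
    simp only [mem_filter, mem_insert]
    constructor
    · rintro ⟨hyC, hyle⟩
      obtain ⟨i, hi, rfl⟩ := hsurj y hyC
      rcases lt_trichotomy i (j+1) with h | rfl | h
      · right
        refine ⟨hmem i hi, ?_⟩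
        rcases Nat.lt_succ_iff_lt_or_eq.1 h with h' | rfl
        · exact (hmono i j h' hj).le
        · exact le_rfl
      · exact Or.inl rfl
      · exact absurd hyle (not_le_of_gt (hmono (j+1) i h hi))
    · rintro (rfl | ⟨hyC, hyle⟩)
      · exact ⟨hmem _ hj1, le_rfl⟩
      · exact ⟨hyC, hyle.trans (hmono j (j+1) (Nat.lt_succ_self j) hj1).le⟩
  have htop : Rab ρ C (zz (k-1)) = 0 := by
    rw [Rab]
    convert Finset.sum_empty
    ext y
    simp only [mem_filter, notMem_empty, iff_false, not_and]
    intro hyC hlt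
    obtain ⟨i, hi, rfl⟩ := hsurj y hyC
    rcases Nat.lt_or_ge i (k-1) with h | h
    · exact absurd (hlt.trans (hmono i (k-1) h (by omega))) (lt_irrefl _)
    · have : i = k - 1 := by omega
      rw [this] at hlt
      exact absurd hlt (lt_irrefl _)
  -- the descent invariant
  have main : ∀ j, j < k → u ρ π C (zz j) - min (ρ (zz j)) (Bv ρ π (zz j)) ≤
      ∑ l ∈ Finset.range j, (min (Ev ρ π (zz l)) (av ρ π (zz (l+1))) - av ρ π (zz l)) := by
    intro j
    induction j with
    | zero =>
      intro _
      simp only [Finset.range_zero, Finset.sum_empty]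
      have h1 : u ρ π C (zz 0) ≤ ρ (zz 0) := u_base ρ π hρ0 hnec hC (hmem 0 hk0) hfilt0
      have h2 : u ρ π C (zz 0) ≤ Bv ρ π (zz 0) := u_le_Bv ρ π hC (hmem 0 hk0)
      have := le_min h1 h2
      linarith
    | succ j ih =>
      intro hj1
      have hj : j < k := Nat.lt_of_succ_lt hj1
      have IH := ih hj
      have hcsc := hconsec j hj1
      have hK1 := K1 ρ π hcsc
      have hK2 := K2 ρ π hcsc hcons
      have hidx : min (ρ (zz (j+1))) (Bv ρ π (zz (j+1))) + av ρ π (zz (j+1)) =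
        Bv ρ π (zz (j+1)) := minB_add_av ρ π _
      have hidy : min (ρ (zz j)) (Bv ρ π (zz j)) + av ρ π (zz j) =
        Bv ρ π (zz j) := minB_add_av ρ π _
      rw [Finset.sum_range_succ]
      have hEy : Ev ρ π (zz j) = av ρ π (zz j) + ρ (zz j) := rfl
      rcases le_total (av ρ π (zz (j+1))) (Ev ρ π (zz j)) with hcase | hcase
      · rw [min_eq_right hcase]
        linarith
      · rw [min_eq_left hcase]
        rcases min_cases (ρ (zz (j+1))) (Bv ρ π (zz (j+1))) with ⟨hmin, hle⟩ | ⟨hmin, hle⟩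
        · rw [hmin]
          have : min (ρ (zz j)) (Bv ρ π (zz j)) ≤ ρ (zz j) := min_le_left _ _
          linarith
        · rw [hmin]
          have h2 : min (ρ (zz j)) (Bv ρ π (zz j)) ≤ Bv ρ π (zz j) := min_le_right _ _
          have h3 : 0 ≤ ρ (zz j) := hρ0 _
          linarith
  -- conclude
  clear_value k
  obtain ⟨m, rfl⟩ : ∃ m, k = m + 1 := ⟨k - 1, by omega⟩
  have htop' := htop
  simp only [Nat.add_sub_cancel] at htop'
  have hmain := main m (Nat.lt_succ_self m)
  have hpi : π C ≤ u ρ π C (zz m) := by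
    have := u_ge_pi ρ π (C := C) (x := zz m) hC
    rw [htop'] at this
    linarith
  rw [Finset.sum_range_succ]
  have hsum_eq : ∑ l ∈ Finset.range m,
      (min (Ev ρ π (zz l)) (if l+1 < m+1 then av ρ π (zz (l+1)) else vmax ρ π)
        - av ρ π (zz l)) =
      ∑ l ∈ Finset.range m, (min (Ev ρ π (zz l)) (av ρ π (zz (l+1))) - av ρ π (zz l)) := by
    refine Finset.sum_congr rfl ?_
    intro l hl
    rw [if_pos (by simpa using Nat.succ_lt_succ (Finset.mem_range.1 hl))]
  rw [hsum_eq]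
  have hif : (if m+1 < m+1 then av ρ π (zz (m+1)) else vmax ρ π) = vmax ρ π :=
    if_neg (lt_irrefl _)
  rw [hif, min_eq_left (Ev_le_v ρ π hρ0 _)]
  have hEv : Ev ρ π (zz m) = av ρ π (zz m) + ρ (zz m) := rfl
  have hminle : min (ρ (zz m)) (Bv ρ π (zz m)) ≤ ρ (zz m) := min_le_left _ _
  linarith

section Grid
variable [Nonempty X]

/-- the grid of all arc endpoints. -/
noncomputable def grid : Finset ℝ :=
  (univ.image (av ρ π)) ∪ (univ.image (Ev ρ π)) ∪ {0, vmax ρ π}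

lemma zero_mem_grid : (0:ℝ) ∈ grid ρ π := by simp [grid]
lemma v_mem_grid : vmax ρ π ∈ grid ρ π := by simp [grid]
lemma av_mem_grid (x : X) : av ρ π x ∈ grid ρ π := by simp [grid]
lemma Ev_mem_grid (x : X) : Ev ρ π x ∈ grid ρ π := by simp [grid]

lemma grid_nonneg (hρ0 : ∀ x, 0 ≤ ρ x) {r : ℝ} (hr : r ∈ grid ρ π) : 0 ≤ r := by
  simp only [grid, mem_union, mem_image, mem_insert, mem_singleton] at hr
  rcases hr with (⟨x, _, rfl⟩ | ⟨x, _, rfl⟩) | (rfl | rfl)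
  · exact av_nonneg ρ π x
  · exact (av_nonneg ρ π x).trans (av_le_Ev ρ π hρ0 x)
  · exact le_refl 0
  · exact v_nonneg ρ π hρ0

lemma grid_le_v (hρ0 : ∀ x, 0 ≤ ρ x) {r : ℝ} (hr : r ∈ grid ρ π) : r ≤ vmax ρ π := by
  simp only [grid, mem_union, mem_image, mem_insert, mem_singleton] at hr
  rcases hr with (⟨x, _, rfl⟩ | ⟨x, _, rfl⟩) | (rfl | rfl)
  · exact (av_le_Ev ρ π hρ0 x).trans (Ev_le_v ρ π hρ0 x)
  · exact Ev_le_v ρ π hρ0 x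
  · exact v_nonneg ρ π hρ0
  · exact le_refl _

/-- number of grid points. -/
noncomputable def gN : ℕ := (grid ρ π).card

lemma gN_pos : 0 < gN ρ π := Finset.card_pos.2 ⟨0, zero_mem_grid ρ π⟩

/-- the increasing enumeration of the grid. -/
noncomputable def gfun : ℕ → ℝ := fun i =>
  if h : i < gN ρ π then ((grid ρ π).orderIsoOfFin rfl ⟨i, h⟩ : ℝ) else vmax ρ π

lemma gfun_mem {i : ℕ} (h : i < gN ρ π) : gfun ρ π i ∈ grid ρ π := by
  rw [gfun, dif_pos h]
  exact ((grid ρ π).orderIsoOfFin rfl ⟨i, h⟩).2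

lemma gfun_strictMono {i j : ℕ} (hij : i < j) (hj : j < gN ρ π) :
    gfun ρ π i < gfun ρ π j := by
  have hi : i < gN ρ π := hij.trans hj
  simp only [gfun]
  rw [dif_pos hi, dif_pos hj]
  have : (⟨i, hi⟩ : Fin (gN ρ π)) < ⟨j, hj⟩ := hij
  exact_mod_cast ((grid ρ π).orderIsoOfFin rfl).lt_iff_lt.2 this

lemma gfun_mono {i j : ℕ} (hij : i ≤ j) (hj : j < gN ρ π) :
    gfun ρ π i ≤ gfun ρ π j := by
  rcases lt_or_eq_of_le hij with h | rfl
  · exact (gfun_strictMono ρ π h hj).le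
  · exact le_rfl

lemma gfun_le_iff {i j : ℕ} (hi : i < gN ρ π) (hj : j < gN ρ π) :
    gfun ρ π i ≤ gfun ρ π j ↔ i ≤ j := by
  constructor
  · intro h
    by_contra hc
    exact absurd (gfun_strictMono ρ π (by omega) hi) (not_lt_of_ge h)
  · intro h
    exact gfun_mono ρ π h hj

lemma gfun_surj {r : ℝ} (hr : r ∈ grid ρ π) : ∃ i, i < gN ρ π ∧ gfun ρ π i = r := by
  set w : Fin (gN ρ π) ≃o {x // x ∈ grid ρ π} := (grid ρ π).orderIsoOfFin rfl with hw
  set j := w.symm ⟨r, hr⟩ with hj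
  refine ⟨j.val, j.isLt, ?_⟩
  simp only [gfun]
  rw [dif_pos j.isLt]
  have h4 : (⟨j.val, j.isLt⟩ : Fin (gN ρ π)) = j := Fin.eta _ _
  show ((w (w.symm ⟨r, hr⟩)) : ℝ) = r
  rw [OrderIso.apply_symm_apply]

lemma gfun_zero (hρ0 : ∀ x, 0 ≤ ρ x) : gfun ρ π 0 = 0 := by
  obtain ⟨i0, hi0, hval⟩ := gfun_surj ρ π (zero_mem_grid ρ π)
  have h1 : 0 ≤ gfun ρ π 0 := grid_nonneg ρ π hρ0 (gfun_mem ρ π (gN_pos ρ π))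
  have h2 : gfun ρ π 0 ≤ gfun ρ π i0 := gfun_mono ρ π (Nat.zero_le _) hi0
  rw [hval] at h2
  linarith

lemma gfun_last (hρ0 : ∀ x, 0 ≤ ρ x) : gfun ρ π (gN ρ π - 1) = vmax ρ π := by
  obtain ⟨i0, hi0, hval⟩ := gfun_surj ρ π (v_mem_grid ρ π)
  have h0 : gN ρ π - 1 < gN ρ π := by have := gN_pos ρ π; omega
  have h1 : gfun ρ π (gN ρ π - 1) ≤ vmax ρ π :=
    grid_le_v ρ π hρ0 (gfun_mem ρ π h0)
  have h2 : gfun ρ π i0 ≤ gfun ρ π (gN ρ π - 1) := gfun_mono ρ π (by omega) h0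
  rw [hval] at h2
  linarith

/-- sum of cell lengths of cells within `[p, q]`. -/
noncomputable def Ssum (p q : ℝ) : ℝ :=
  ∑ i ∈ (Finset.range (gN ρ π - 1)).filter
    (fun i => p ≤ gfun ρ π i ∧ gfun ρ π (i+1) ≤ q), (gfun ρ π (i+1) - gfun ρ π i)

lemma Ssum_eq {p q : ℝ} (hp : p ∈ grid ρ π) (hq : q ∈ grid ρ π) (hpq : p ≤ q) :
    Ssum ρ π p q = q - p := by
  obtain ⟨ip, hip, hvp⟩ := gfun_surj ρ π hp
  obtain ⟨iq, hiq, hvq⟩ := gfun_surj ρ π hq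
  have hipq : ip ≤ iq := by
    rw [← gfun_le_iff ρ π hip hiq, hvp, hvq]; exact hpq
  have hfilt : (Finset.range (gN ρ π - 1)).filter
      (fun i => p ≤ gfun ρ π i ∧ gfun ρ π (i+1) ≤ q) = Finset.Ico ip iq := by
    ext i
    simp only [mem_filter, Finset.mem_range, Finset.mem_Ico]
    constructor
    · rintro ⟨hi, h1, h2⟩
      have hi' : i < gN ρ π := by omega
      have hi1 : i + 1 < gN ρ π := by omega
      constructor
      · rw [← gfun_le_iff ρ π hip hi', ← hvp] at *; exact h1
      · have : i + 1 ≤ iq := by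
          rw [← gfun_le_iff ρ π hi1 hiq, hvq]; exact h2
        omega
    · rintro ⟨h1, h2⟩
      have hi : i < gN ρ π - 1 := by omega
      have hi' : i < gN ρ π := by omega
      have hi1 : i + 1 < gN ρ π := by omega
      refine ⟨hi, ?_, ?_⟩
      · rw [← hvp]; exact gfun_mono ρ π h1 hi'
      · rw [← hvq]; exact gfun_mono ρ π (by omega) hiq
  rw [Ssum, hfilt, ← hvp, ← hvq]
  rw [Finset.sum_Ico_eq_sub _ hipq, Finset.sum_range_sub (gfun ρ π),
    Finset.sum_range_sub (gfun ρ π)]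
  ring

lemma Ssum_zero {p q : ℝ} (hqp : q < p) : Ssum ρ π p q = 0 := by
  rw [Ssum]
  convert Finset.sum_empty
  ext i
  simp only [mem_filter, Finset.mem_range, notMem_empty, iff_false, not_and]
  intro hi h1 h2
  have hi1 : i + 1 < gN ρ π := by omega
  have := gfun_strictMono ρ π (Nat.lt_succ_self i) hi1
  linarith

lemma Ssum_signed {p q : ℝ} (hp : p ∈ grid ρ π) (hq : q ∈ grid ρ π) :
    Ssum ρ π p q - Ssum ρ π q p = q - p := by
  rcases le_or_gt p q with h | h
  · rcases lt_or_eq_of_le h with h' | rfl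
    · rw [Ssum_eq ρ π hp hq h, Ssum_zero ρ π h']; ring
    · rw [Ssum_eq ρ π hp hq le_rfl]; ring
  · rw [Ssum_eq ρ π hq hp h.le, Ssum_zero ρ π h]; ring

/-- the set of elements whose arc covers cell `i`. -/
noncomputable def Sset (i : ℕ) : Finset X :=
  univ.filter (fun x => av ρ π x ≤ gfun ρ π i ∧ gfun ρ π (i+1) ≤ Ev ρ π x)

/-- the optimal solution `σ`. -/
noncomputable def sigma (T : Finset X) : ℝ :=
  ∑ i ∈ (Finset.range (gN ρ π - 1)).filter (fun i => Sset ρ π i = T),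
    (gfun ρ π (i+1) - gfun ρ π i)

lemma cell_len_nonneg {i : ℕ} (hi : i ∈ Finset.range (gN ρ π - 1)) :
    0 ≤ gfun ρ π (i+1) - gfun ρ π i := by
  rw [Finset.mem_range] at hi
  have := gfun_strictMono ρ π (Nat.lt_succ_self i) (by omega)
  linarith

lemma sigma_nonneg (T : Finset X) : 0 ≤ sigma ρ π T := by
  refine Finset.sum_nonneg ?_
  intro i hi
  exact cell_len_nonneg ρ π (Finset.mem_filter.1 hi).1

/-- weighted fiberwise decomposition. -/
lemma sigma_fiber (P : Finset X → Prop) [DecidablePred P] (g : Finset X → ℝ) :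
    ∑ T ∈ univ.filter P, sigma ρ π T * g T =
      ∑ i ∈ (Finset.range (gN ρ π - 1)).filter (fun i => P (Sset ρ π i)),
        (gfun ρ π (i+1) - gfun ρ π i) * g (Sset ρ π i) := by
  set cellsP := (Finset.range (gN ρ π - 1)).filter (fun i => P (Sset ρ π i)) with hcp
  have hmaps : ∀ i ∈ cellsP, Sset ρ π i ∈ univ.filter P := by
    intro i hi
    simp only [hcp, mem_filter] at hi
    exact mem_filter.2 ⟨mem_univ _, hi.2⟩
  have := Finset.sum_fiberwise_of_maps_to hmaps
    (fun i => (gfun ρ π (i+1) - gfun ρ π i) * g (Sset ρ π i))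
  rw [← this]
  refine Finset.sum_congr rfl ?_
  intro T hT
  have hPT : P T := (mem_filter.1 hT).2
  have hpfilt : cellsP.filter (fun i => Sset ρ π i = T) =
      (Finset.range (gN ρ π - 1)).filter (fun i => Sset ρ π i = T) := by
    ext i
    simp only [hcp, mem_filter]
    constructor
    · rintro ⟨⟨hi, _⟩, he⟩
      exact ⟨hi, he⟩
    · rintro ⟨hi, he⟩
      exact ⟨⟨hi, he ▸ hPT⟩, he⟩
  rw [hpfilt, sigma, Finset.sum_mul]
  refine Finset.sum_congr rfl ?_
  intro i hi
  rw [(mem_filter.1 hi).2]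

end Grid

/-- abstract crossing-count lemma. -/
lemma crossing (c c' : ℝ) (hcc : c < c') (al ga : ℕ → ℝ) :
    ∀ k : ℕ, (∀ l, l < k → ga l ≤ al (l+1)) →
    (∀ l, l ≤ k → al l ≤ c ∨ c' ≤ al l) →
    (∀ l, l < k → ga l ≤ c ∨ c' ≤ ga l) →
    ∑ l ∈ Finset.range k, (if al l ≤ c ∧ c' ≤ ga l then (1:ℝ) else 0) ≤
      (∑ l ∈ Finset.range k, (if ga l ≤ c ∧ c' ≤ al l then (1:ℝ) else 0)) +
      (if c' ≤ al k then 1 else 0) := by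
  intro k
  induction k with
  | zero =>
    intro _ _ _
    simp only [Finset.range_zero, Finset.sum_empty, zero_add]
    positivity
  | succ k ih =>
    intro hga hda hdg
    have IH := ih (fun l hl => hga l (by omega)) (fun l hl => hda l (by omega))
      (fun l hl => hdg l (by omega))
    rw [Finset.sum_range_succ, Finset.sum_range_succ]
    by_cases hup : al k ≤ c ∧ c' ≤ ga k
    · -- counted up-crossing at k
      have h1 : (if c' ≤ al k then (1:ℝ) else 0) = 0 := by
        rw [if_neg]; intro h; linarith [hup.1]
      have h2 : (if c' ≤ al (k+1) then (1:ℝ) else 0) = 1 := by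
        rw [if_pos]; exact hup.2.trans (hga k (Nat.lt_succ_self k))
      rw [if_pos hup, h2]
      rw [h1] at IH
      have h3 : (0:ℝ) ≤ if ga k ≤ c ∧ c' ≤ al k then (1:ℝ) else 0 := by positivity
      linarith
    · rw [if_neg hup]
      by_cases hdown : ga k ≤ c ∧ c' ≤ al k
      · rw [if_pos hdown]
        have h1 : (if c' ≤ al k then (1:ℝ) else 0) ≤ 1 := by
          split <;> norm_num
        have h2 : (0:ℝ) ≤ if c' ≤ al (k+1) then (1:ℝ) else 0 := by positivity
        linarith
      · rw [if_neg hdown]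
        rcases hda (k+1) le_rfl with hlow | hhigh
        · -- al (k+1) ≤ c : target indicator is 0; show state at k is low
          have h2 : (if c' ≤ al (k+1) then (1:ℝ) else 0) = 0 := by
            rw [if_neg]; intro h; linarith
          rw [h2]
          have h1 : (if c' ≤ al k then (1:ℝ) else 0) = 0 := by
            rw [if_neg]
            intro h
            -- then down must have been counted or ga k ≥ c' pushing al (k+1) high
            rcases hdg k (Nat.lt_succ_self k) with hg | hg
            · exact hdown ⟨hg, h⟩
            · have := (hg.trans (hga k (Nat.lt_succ_self k)))
              linarith
          rw [h1] at IH
          linarith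
        · have h2 : (if c' ≤ al (k+1) then (1:ℝ) else 0) = 1 := if_pos hhigh
          have h1 : (if c' ≤ al k then (1:ℝ) else 0) ≤ 1 := by split <;> norm_num
          rw [h2]
          linarith

section Grid2
variable [Nonempty X]

lemma grid_min_mem {p q : ℝ} (hp : p ∈ grid ρ π) (hq : q ∈ grid ρ π) :
    min p q ∈ grid ρ π := by
  rcases le_total p q with h | h
  · rwa [min_eq_left h]
  · rwa [min_eq_right h]

lemma grid_dich {r : ℝ} (hr : r ∈ grid ρ π) {i : ℕ} (hi : i < gN ρ π - 1) :
    r ≤ gfun ρ π i ∨ gfun ρ π (i+1) ≤ r := by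
  obtain ⟨j, hj, rfl⟩ := gfun_surj ρ π hr
  rcases le_or_gt j i with h | h
  · exact Or.inl (gfun_mono ρ π h (by omega))
  · exact Or.inr (gfun_mono ρ π h hj)

/-- basic cell sum: total length of cells inside the arc of `x` is `ρ x`. -/
lemma cell_sum_mem (hρ0 : ∀ x, 0 ≤ ρ x) (x : X) :
    ∑ i ∈ (Finset.range (gN ρ π - 1)).filter (fun i => x ∈ Sset ρ π i),
      (gfun ρ π (i+1) - gfun ρ π i) = ρ x := by
  have hcond : ∀ i, x ∈ Sset ρ π i ↔
      (av ρ π x ≤ gfun ρ π i ∧ gfun ρ π (i+1) ≤ Ev ρ π x) := by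
    intro i
    simp [Sset]
  have : (Finset.range (gN ρ π - 1)).filter (fun i => x ∈ Sset ρ π i) =
      (Finset.range (gN ρ π - 1)).filter
        (fun i => av ρ π x ≤ gfun ρ π i ∧ gfun ρ π (i+1) ≤ Ev ρ π x) := by
    ext i; simp only [mem_filter, hcond]
  rw [this, ← Ssum]
  rw [Ssum_eq ρ π (av_mem_grid ρ π x) (Ev_mem_grid ρ π x) (av_le_Ev ρ π hρ0 x), Ev]
  ring

lemma sigma_marginal (hρ0 : ∀ x, 0 ≤ ρ x) (x : X) :
    ∑ T ∈ univ.filter (fun T : Finset X => x ∈ T), sigma ρ π T = ρ x := by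
  have h := sigma_fiber ρ π (fun T => x ∈ T) (fun _ => 1)
  simp only [mul_one] at h
  rw [h, cell_sum_mem ρ π hρ0 x]

lemma sigma_total (hρ0 : ∀ x, 0 ≤ ρ x) :
    ∑ T : Finset X, sigma ρ π T = vmax ρ π := by
  have h := sigma_fiber ρ π (fun _ => True) (fun _ => 1)
  simp only [mul_one, Finset.filter_true] at h
  rw [h, Finset.sum_range_sub (gfun ρ π), gfun_zero ρ π hρ0]
  have h0 : gN ρ π - 1 < gN ρ π := by have := gN_pos ρ π; omega
  rw [gfun_last ρ π hρ0]
  ring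

/-- covered length for a chain. -/
noncomputable def covC (C : Finset X) : ℝ :=
  ∑ i ∈ (Finset.range (gN ρ π - 1)).filter (fun i => ((Sset ρ π i) ∩ C).Nonempty),
    (gfun ρ π (i+1) - gfun ρ π i)

lemma sigma_excess (hρ0 : ∀ x, 0 ≤ ρ x) (C : Finset X) :
    ∑ T ∈ univ.filter (fun T : Finset X => 2 ≤ (T ∩ C).card),
      sigma ρ π T * (((T ∩ C).card : ℝ) - 1) = (∑ x ∈ C, ρ x) - covC ρ π C := by
  have h := sigma_fiber ρ π (fun T => 2 ≤ (T ∩ C).card)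
    (fun T => ((T ∩ C).card : ℝ) - 1)
  rw [h]
  -- ∑_i len·card(Sset_i ∩ C) = ∑_{x∈C} ρ x
  have hB : ∑ i ∈ Finset.range (gN ρ π - 1),
      (gfun ρ π (i+1) - gfun ρ π i) * (((Sset ρ π i ∩ C).card : ℝ)) = ∑ x ∈ C, ρ x := by
    have hcard : ∀ i, ((Sset ρ π i ∩ C).card : ℝ) =
        ∑ x ∈ C, (if x ∈ Sset ρ π i then (1:ℝ) else 0) := by
      intro i
      rw [← Finset.sum_filter, Finset.sum_const, Finset.filter_mem_eq_inter,
        Finset.inter_comm]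
      simp
    calc ∑ i ∈ Finset.range (gN ρ π - 1),
        (gfun ρ π (i+1) - gfun ρ π i) * (((Sset ρ π i ∩ C).card : ℝ))
        = ∑ i ∈ Finset.range (gN ρ π - 1), ∑ x ∈ C,
            (gfun ρ π (i+1) - gfun ρ π i) * (if x ∈ Sset ρ π i then (1:ℝ) else 0) := by
          refine Finset.sum_congr rfl ?_
          intro i _
          rw [hcard i, Finset.mul_sum]
      _ = ∑ x ∈ C, ∑ i ∈ Finset.range (gN ρ π - 1),
            (gfun ρ π (i+1) - gfun ρ π i) * (if x ∈ Sset ρ π i then (1:ℝ) else 0) :=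
          Finset.sum_comm
      _ = ∑ x ∈ C, ρ x := by
          refine Finset.sum_congr rfl ?_
          intro x _
          rw [← cell_sum_mem ρ π hρ0 x, Finset.sum_filter]
          refine Finset.sum_congr rfl ?_
          intro i _
          split <;> ring
  rw [← hB, covC]
  rw [Finset.sum_filter, Finset.sum_filter, ← Finset.sum_sub_distrib]
  refine Finset.sum_congr rfl ?_
  intro i hi
  have hlen : 0 ≤ gfun ρ π (i+1) - gfun ρ π i := cell_len_nonneg ρ π hi
  by_cases h2 : 2 ≤ (Sset ρ π i ∩ C).card
  · rw [if_pos h2, if_pos (Finset.card_pos.1 (by omega))]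
    push_cast
    ring
  · rw [if_neg h2]
    rcases Nat.lt_or_ge (Sset ρ π i ∩ C).card 1 with h1 | h1
    · have : (Sset ρ π i ∩ C).card = 0 := by omega
      rw [if_neg (by rw [← Finset.card_pos]; omega), this]
      norm_num
    · have : (Sset ρ π i ∩ C).card = 1 := by omega
      rw [if_pos (Finset.card_pos.1 (by omega)), this]
      norm_num

end Grid2

lemma cov_ge_pi [Nonempty X] (hρ0 : ∀ x, 0 ≤ ρ x)
    (hnec : ∀ C : Finset X, isMC C → π C ≤ ∑ x ∈ C, ρ x)
    (hcons : ∀ C1 C2 : Finset X, isMC C1 → isMC C2 → ∀ z ∈ C1 ∩ C2,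
      π C1 + π C2 =
        π (C1.filter (· ≤ z) ∪ C2.filter (z ≤ ·)) +
        π (C2.filter (· ≤ z) ∪ C1.filter (z ≤ ·)))
    {C : Finset X} (hC : isMC C) : π C ≤ covC ρ π C := by
  obtain ⟨zz, hmem, hmono, hsurj⟩ := exists_enum hC
  set k := C.card with hk
  set αf : ℕ → ℝ := fun l => if l < k then av ρ π (zz l) else vmax ρ π with hαf
  set γf : ℕ → ℝ := fun l => min (Ev ρ π (zz l)) (αf (l+1)) with hγf
  have hαg : ∀ l, αf l ∈ grid ρ π := by
    intro l
    rw [hαf]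
    simp only
    split
    · exact av_mem_grid ρ π _
    · exact v_mem_grid ρ π
  have hγg : ∀ l, γf l ∈ grid ρ π := by
    intro l
    exact grid_min_mem ρ π (Ev_mem_grid ρ π _) (hαg (l+1))
  have h1 : π C ≤ ∑ l ∈ Finset.range k, (γf l - αf l) := by
    have hcb := chain_bound ρ π hρ0 hnec hcons hC hmem hmono hsurj
    rw [← hk] at hcb
    refine hcb.trans (le_of_eq (Finset.sum_congr rfl ?_))
    intro l hl
    rw [Finset.mem_range] at hl
    rw [hγf, hαf]
    simp only
    rw [if_pos hl]
  have h2 : ∀ l, γf l - αf l = Ssum ρ π (αf l) (γf l) - Ssum ρ π (γf l) (αf l) :=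
    fun l => (Ssum_signed ρ π (hαg l) (hγg l)).symm
  have h3 : π C ≤ ∑ i ∈ Finset.range (gN ρ π - 1), ∑ l ∈ Finset.range k,
      ((if αf l ≤ gfun ρ π i ∧ gfun ρ π (i+1) ≤ γf l
          then (gfun ρ π (i+1) - gfun ρ π i) else 0)
        - (if γf l ≤ gfun ρ π i ∧ gfun ρ π (i+1) ≤ αf l
            then (gfun ρ π (i+1) - gfun ρ π i) else 0)) := by
    rw [Finset.sum_comm]
    refine h1.trans (le_of_eq (Finset.sum_congr rfl ?_))
    intro l _
    rw [h2 l, Ssum, Ssum, Finset.sum_filter, Finset.sum_filter,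
      ← Finset.sum_sub_distrib]
  refine h3.trans ?_
  rw [covC, Finset.sum_filter]
  refine Finset.sum_le_sum ?_
  intro i hi
  have hcc : gfun ρ π i < gfun ρ π (i+1) := by
    rw [Finset.mem_range] at hi
    exact gfun_strictMono ρ π (Nat.lt_succ_self i) (by omega)
  have hlen : (0:ℝ) ≤ gfun ρ π (i+1) - gfun ρ π i := by linarith
  set c := gfun ρ π i with hc
  set c' := gfun ρ π (i+1) with hc'
  -- rewrite as len * indicator sums
  have hfact : ∑ l ∈ Finset.range k,
      ((if αf l ≤ c ∧ c' ≤ γf l then (c' - c) else 0)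
        - (if γf l ≤ c ∧ c' ≤ αf l then (c' - c) else 0)) =
      (c' - c) * ((∑ l ∈ Finset.range k, (if αf l ≤ c ∧ c' ≤ γf l then (1:ℝ) else 0))
        - (∑ l ∈ Finset.range k, (if γf l ≤ c ∧ c' ≤ αf l then (1:ℝ) else 0))) := by
    rw [mul_sub, Finset.mul_sum, Finset.mul_sum, ← Finset.sum_sub_distrib]
    refine Finset.sum_congr rfl ?_
    intro l _
    split <;> split <;> ring
  rw [hfact]
  have hcross := crossing c c' hcc αf γf k
    (fun l _ => min_le_right _ _)
    (fun l _ => grid_dich ρ π (hαg l) (by rw [Finset.mem_range] at hi; exact hi))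
    (fun l _ => grid_dich ρ π (hγg l) (by rw [Finset.mem_range] at hi; exact hi))
  by_cases hcov : ((Sset ρ π i) ∩ C).Nonempty
  · rw [if_pos hcov]
    have hind : (if c' ≤ αf k then (1:ℝ) else 0) ≤ 1 := by split <;> norm_num
    have : (∑ l ∈ Finset.range k, (if αf l ≤ c ∧ c' ≤ γf l then (1:ℝ) else 0))
        - (∑ l ∈ Finset.range k, (if γf l ≤ c ∧ c' ≤ αf l then (1:ℝ) else 0)) ≤ 1 := by
      linarith
    calc (c' - c) * _ ≤ (c' - c) * 1 := by
          exact mul_le_mul_of_nonneg_left this hlen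
      _ = c' - c := mul_one _
  · rw [if_neg hcov]
    have hup : ∀ l ∈ Finset.range k, (if αf l ≤ c ∧ c' ≤ γf l then (1:ℝ) else 0) = 0 := by
      intro l hl
      rw [Finset.mem_range] at hl
      rw [if_neg]
      rintro ⟨hu1, hu2⟩
      refine hcov ⟨zz l, Finset.mem_inter.2 ⟨?_, hmem l hl⟩⟩
      rw [Sset, mem_filter]
      refine ⟨mem_univ _, ?_, ?_⟩
      · rw [hαf] at hu1
        simp only at hu1
        rw [if_pos hl] at hu1
        exact hu1
      · exact hu2.trans ((min_le_left _ _ : γf l ≤ Ev ρ π (zz l)))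
    rw [Finset.sum_congr rfl hup, Finset.sum_const_zero, zero_sub]
    have hdn : (0:ℝ) ≤ ∑ l ∈ Finset.range k,
        (if γf l ≤ c ∧ c' ≤ αf l then (1:ℝ) else 0) := by positivity
    have : (c' - c) * -(∑ l ∈ Finset.range k,
        (if γf l ≤ c ∧ c' ≤ αf l then (1:ℝ) else 0)) ≤ 0 := by
      apply mul_nonpos_of_nonneg_of_nonpos hlen
      linarith
    linarith

/-- any feasible solution dominates each `ρ x`. -/
lemma lb_rho {σ' : Finset X → ℝ} (hs0 : ∀ S, 0 ≤ σ' S)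
    (hmar : ∀ x : X, ∑ S ∈ univ.filter (fun S : Finset X => x ∈ S), σ' S = ρ x)
    (x : X) : ρ x ≤ ∑ S : Finset X, σ' S := by
  rw [← hmar x]
  exact Finset.sum_le_sum_of_subset_of_nonneg (Finset.filter_subset _ _)
    (fun S _ _ => hs0 S)

/-- any feasible solution dominates each `π C`. -/
lemma lb_pi {σ' : Finset X → ℝ} (hs0 : ∀ S, 0 ≤ σ' S)
    (hmar : ∀ x : X, ∑ S ∈ univ.filter (fun S : Finset X => x ∈ S), σ' S = ρ x)
    {C : Finset X}
    (hexc : ∑ S ∈ univ.filter (fun S : Finset X => 2 ≤ (S ∩ C).card),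
      σ' S * (((S ∩ C).card : ℝ) - 1) ≤ (∑ x ∈ C, ρ x) - π C) :
    π C ≤ ∑ S : Finset X, σ' S := by
  have hcardsum : ∑ S : Finset X, σ' S * (((S ∩ C).card : ℝ)) = ∑ x ∈ C, ρ x := by
    have hcard : ∀ S : Finset X, ((S ∩ C).card : ℝ) =
        ∑ x ∈ C, (if x ∈ S then (1:ℝ) else 0) := by
      intro S
      rw [← Finset.sum_filter, Finset.sum_const, Finset.filter_mem_eq_inter,
        Finset.inter_comm]
      simp
    calc ∑ S : Finset X, σ' S * (((S ∩ C).card : ℝ))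
        = ∑ S : Finset X, ∑ x ∈ C, σ' S * (if x ∈ S then (1:ℝ) else 0) := by
          refine Finset.sum_congr rfl ?_
          intro S _
          rw [hcard S, Finset.mul_sum]
      _ = ∑ x ∈ C, ∑ S : Finset X, σ' S * (if x ∈ S then (1:ℝ) else 0) :=
          Finset.sum_comm
      _ = ∑ x ∈ C, ρ x := by
          refine Finset.sum_congr rfl ?_
          intro x _
          rw [← hmar x, Finset.sum_filter]
          refine Finset.sum_congr rfl ?_
          intro S _
          split <;> ring
  -- N = sum over sets meeting C
  have hident : ∑ S ∈ univ.filter (fun S : Finset X => 1 ≤ (S ∩ C).card), σ' S =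
      (∑ S : Finset X, σ' S * (((S ∩ C).card : ℝ))) -
      ∑ S ∈ univ.filter (fun S : Finset X => 2 ≤ (S ∩ C).card),
        σ' S * (((S ∩ C).card : ℝ) - 1) := by
    rw [Finset.sum_filter, Finset.sum_filter, ← Finset.sum_sub_distrib]
    refine Finset.sum_congr rfl ?_
    intro S _
    by_cases h2 : 2 ≤ (S ∩ C).card
    · rw [if_pos h2, if_pos (by omega)]
      ring
    · rw [if_neg h2]
      rcases Nat.lt_or_ge (S ∩ C).card 1 with h1 | h1
      · have h0 : (S ∩ C).card = 0 := by omega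
        rw [if_neg (by omega), h0]
        norm_num
      · have h0 : (S ∩ C).card = 1 := by omega
        rw [if_pos (by omega), h0]
        norm_num
  have hN : π C ≤ ∑ S ∈ univ.filter (fun S : Finset X => 1 ≤ (S ∩ C).card), σ' S := by
    rw [hident, hcardsum]
    linarith
  refine hN.trans ?_
  exact Finset.sum_le_sum_of_subset_of_nonneg (Finset.filter_subset _ _)
    (fun S _ _ => hs0 S)

end QLP

/-- Theorem 2 (optimal value of (Q)): under the hypotheses of the main existence theorem,
the LP minimizing `∑_S σ_S` subject to the marginal and excess constraints has an optimal
solution whose value equals `max{max_x ρ_x, max_C π_C}`: it is a feasible solution of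
minimal objective value, its value dominates every `ρ_x` and every `π_C`, and it is
attained by some `ρ_x` or some `π_C`. -/
theorem Q_optimal_value (X : Type*) [Fintype X] [Nonempty X] [DecidableEq X]
    [PartialOrder X] [DecidableRel (· ≤ · : X → X → Prop)]
    (ρ : X → ℝ) (hρ0 : ∀ x, 0 ≤ ρ x) (hρ1 : ∀ x, ρ x ≤ 1)
    (π : Finset X → ℝ)
    (hπ1 : ∀ C : Finset X, IsMaxChain (· ≤ ·) (C : Set X) → π C ≤ 1)
    (hnec : ∀ C : Finset X, IsMaxChain (· ≤ ·) (C : Set X) → π C ≤ ∑ x ∈ C, ρ x)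
    (hcons : ∀ C1 C2 : Finset X, IsMaxChain (· ≤ ·) (C1 : Set X) →
      IsMaxChain (· ≤ ·) (C2 : Set X) → ∀ x ∈ C1 ∩ C2,
      π C1 + π C2 =
        π (C1.filter (· ≤ x) ∪ C2.filter (x ≤ ·)) +
        π (C2.filter (· ≤ x) ∪ C1.filter (x ≤ ·))) :
    ∃ σ : Finset X → ℝ,
      -- feasibility of σ for (Q)
      (∀ S, 0 ≤ σ S) ∧
      (∀ x : X, ∑ S ∈ univ.filter (fun S : Finset X => x ∈ S), σ S = ρ x) ∧
      (∀ C : Finset X, IsMaxChain (· ≤ ·) (C : Set X) →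
        ∑ S ∈ univ.filter (fun S : Finset X => 2 ≤ (S ∩ C).card),
          σ S * (((S ∩ C).card : ℝ) - 1) ≤ (∑ x ∈ C, ρ x) - π C) ∧
      -- optimality: every feasible solution has objective value at least that of σ
      (∀ σ' : Finset X → ℝ, (∀ S, 0 ≤ σ' S) →
        (∀ x : X, ∑ S ∈ univ.filter (fun S : Finset X => x ∈ S), σ' S = ρ x) →
        (∀ C : Finset X, IsMaxChain (· ≤ ·) (C : Set X) →
          ∑ S ∈ univ.filter (fun S : Finset X => 2 ≤ (S ∩ C).card),
            σ' S * (((S ∩ C).card : ℝ) - 1) ≤ (∑ x ∈ C, ρ x) - π C) →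
        ∑ S : Finset X, σ S ≤ ∑ S : Finset X, σ' S) ∧
      -- the optimal value equals max{max_x ρ_x, max_C π_C}
      (∀ x : X, ρ x ≤ ∑ S : Finset X, σ S) ∧
      (∀ C : Finset X, IsMaxChain (· ≤ ·) (C : Set X) → π C ≤ ∑ S : Finset X, σ S) ∧
      ((∃ x : X, ∑ S : Finset X, σ S = ρ x) ∨
        (∃ C : Finset X, IsMaxChain (· ≤ ·) (C : Set X) ∧ ∑ S : Finset X, σ S = π C)) := by
  
  have hnec' : ∀ C : Finset X, QLP.isMC C → π C ≤ ∑ x ∈ C, ρ x := hnec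
  have hcons' : ∀ C1 C2 : Finset X, QLP.isMC C1 → QLP.isMC C2 → ∀ z ∈ C1 ∩ C2,
      π C1 + π C2 =
        π (C1.filter (· ≤ z) ∪ C2.filter (z ≤ ·)) +
        π (C2.filter (· ≤ z) ∪ C1.filter (z ≤ ·)) := hcons
  refine ⟨QLP.sigma ρ π, QLP.sigma_nonneg ρ π, QLP.sigma_marginal ρ π hρ0, ?_, ?_, ?_, ?_, ?_⟩
  · intro C hC
    rw [QLP.sigma_excess ρ π hρ0 C]
    have := QLP.cov_ge_pi ρ π hρ0 hnec' hcons' (C := C) hC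
    linarith
  · intro σ' hs0 hmar hexc
    rw [QLP.sigma_total ρ π hρ0]
    rcases QLP.v_attained ρ π with ⟨x, hx⟩ | ⟨C, hC, hX⟩
    · rw [hx]
      exact QLP.lb_rho ρ hs0 hmar x
    · rw [hX]
      exact QLP.lb_pi ρ π hs0 hmar (hexc C hC)
  · intro x
    rw [QLP.sigma_total ρ π hρ0]
    exact QLP.rho_le_v ρ π x
  · intro C hC
    rw [QLP.sigma_total ρ π hρ0]
    exact QLP.pi_le_v ρ π hC
  · rw [QLP.sigma_total ρ π hρ0]
    rcases QLP.v_attained ρ π with ⟨x, hx⟩ | ⟨C, hC, hX⟩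
    · exact Or.inl ⟨x, hx⟩
    · exact Or.inr ⟨C, hC, hX⟩
end

section
/- Consider the network interdiction game: let f* be an optimal primal solution and (ρ*, μ*) an optimal dual solution of the path-based LP (M_P)/(M_D), where (M_P) maximizes ∑_λ π⁰_λ f_λ over f ≥ 0 subject to ∑_{λ ∋ (i,j)} f_λ ≤ d_{ij}/p₂ and ∑_{λ ∋ (i,j)} f_λ ≤ c_{ij} for each edge (i,j), with π⁰_λ = 1 − b_λ/p₁. If σ² is a probability distribution over edge subsets with ∑_{I ∋ (i,j)} σ²_I = ρ*_{ij} for all edges (i,j) and ∑_{I: I∩λ ≠ ∅} σ²_I ≥ π⁰_λ − ∑_{(i,j)∈λ} μ*_{ij} for all s–t paths λ, then for every s–t path λ with f*_λ > 0, the inequality ∑_{I: I∩λ≠∅} σ²_I ≤ ∑_{(i,j)∈λ} ρ*_{ij} holds with equality. -/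
open Finset

/-- Complementary slackness in the interdiction game: let `f*` be an optimal primal and
`(ρ*, μ*)` an optimal dual solution of (M_P)/(M_D) (feasibility and complementary
slackness are hypothesized), and let `σ²` be a probability distribution over edge subsets
with edge marginals `ρ*` and path-hitting probabilities at least `π⁰_λ − ∑_{e∈λ} μ*_e`.
Then for every `s`–`t` path `λ` with `f*_λ > 0`, the hitting probability of `λ` equals
`∑_{e∈λ} ρ*_e`. Here edges form a finite type `E`, `Λ` is the set of `s`–`t` paths
(viewed as edge subsets), and `π⁰_λ = 1 − (∑_{e∈λ} b_e)/p₁`. -/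
theorem interdiction_path_hitting_eq (E : Type*) [Fintype E] [DecidableEq E]
    (Λ : Finset (Finset E))
    (b c d : E → ℝ) (hb : ∀ e, 0 < b e) (hc : ∀ e, 0 < c e) (hd : ∀ e, 0 < d e)
    (p₁ p₂ : ℝ) (hp₁ : 0 < p₁) (hp₂ : 0 < p₂)
    (f : Finset E → ℝ) (ρ μ : E → ℝ)
    -- primal feasibility of f*
    (hf0 : ∀ lam ∈ Λ, 0 ≤ f lam)
    (hfd : ∀ e : E, ∑ lam ∈ Λ.filter (fun lam => e ∈ lam), f lam ≤ d e / p₂)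
    (hfc : ∀ e : E, ∑ lam ∈ Λ.filter (fun lam => e ∈ lam), f lam ≤ c e)
    -- dual feasibility of (ρ*, μ*)
    (hρ0 : ∀ e, 0 ≤ ρ e) (hμ0 : ∀ e, 0 ≤ μ e)
    (hdual : ∀ lam ∈ Λ, 1 - (∑ e ∈ lam, b e) / p₁ ≤ ∑ e ∈ lam, (ρ e + μ e))
    -- complementary slackness
    (hcs : ∀ lam ∈ Λ, 0 < f lam → ∑ e ∈ lam, (ρ e + μ e) = 1 - (∑ e ∈ lam, b e) / p₁)
    -- interdiction strategy σ²
    (σ : Finset E → ℝ) (hσ0 : ∀ I, 0 ≤ σ I) (hσ1 : ∑ I : Finset E, σ I = 1)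
    (hσmarg : ∀ e : E, ∑ I ∈ univ.filter (fun I : Finset E => e ∈ I), σ I = ρ e)
    (hσpath : ∀ lam ∈ Λ,
      (1 - (∑ e ∈ lam, b e) / p₁) - ∑ e ∈ lam, μ e ≤
        ∑ I ∈ univ.filter (fun I : Finset E => (I ∩ lam).Nonempty), σ I) :
    ∀ lam ∈ Λ, 0 < f lam →
      ∑ I ∈ univ.filter (fun I : Finset E => (I ∩ lam).Nonempty), σ I = ∑ e ∈ lam, ρ e := by

  intro lam hlam hflam
  -- upper bound: union bound
  have upper : ∑ I ∈ univ.filter (fun I : Finset E => (I ∩ lam).Nonempty), σ I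
      ≤ ∑ e ∈ lam, ρ e := by
    have h1 : ∑ e ∈ lam, ρ e
        = ∑ I : Finset E, ((lam.filter (fun e => e ∈ I)).card : ℝ) * σ I := by
      have : ∑ e ∈ lam, ρ e
          = ∑ e ∈ lam, ∑ I : Finset E, if e ∈ I then σ I else 0 := by
        refine Finset.sum_congr rfl fun e _ => ?_
        rw [← hσmarg e, Finset.sum_filter]
      rw [this, Finset.sum_comm]
      refine Finset.sum_congr rfl fun I _ => ?_
      rw [← Finset.sum_filter, Finset.sum_const, nsmul_eq_mul]
    rw [h1, Finset.sum_filter]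
    refine Finset.sum_le_sum fun I _ => ?_
    by_cases h : (I ∩ lam).Nonempty
    · simp only [h, if_true]
      have hcard : 1 ≤ (lam.filter (fun e => e ∈ I)).card := by
        obtain ⟨x, hx⟩ := h
        simp only [Finset.mem_inter] at hx
        exact Finset.card_pos.mpr ⟨x, Finset.mem_filter.mpr ⟨hx.2, hx.1⟩⟩
      calc σ I = 1 * σ I := (one_mul _).symm
        _ ≤ _ := mul_le_mul_of_nonneg_right (by exact_mod_cast hcard) (hσ0 I)
    · simp only [h, if_false]
      exact mul_nonneg (Nat.cast_nonneg _) (hσ0 I)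
  -- lower bound
  have hcs' := hcs lam hlam hflam
  have hslower := hσpath lam hlam
  have hsum : ∑ e ∈ lam, (ρ e + μ e) = ∑ e ∈ lam, ρ e + ∑ e ∈ lam, μ e :=
    Finset.sum_add_distrib
  have lower : ∑ e ∈ lam, ρ e
      ≤ ∑ I ∈ univ.filter (fun I : Finset E => (I ∩ lam).Nonempty), σ I := by
    have : (1 - (∑ e ∈ lam, b e) / p₁) - ∑ e ∈ lam, μ e = ∑ e ∈ lam, ρ e := by
      rw [← hcs', hsum]; ring
    linarith
  linarith
end
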